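/- arXiv:1402.5549 — 5 statements merged into one kernel-verified Lean document; each statement's English description precedes it below -/
import Mathlib

section
/- Let G be a finite graph and X, Y, Z ⊆ V(G). If for every z ∈ Z there exists an X–Y separation of G of minimum order whose separator contains z, then there exists a nested set S of X–Y separations of minimum order such that Z is covered by the union of the separators of the separations in S. -/
/-- A separation of a graph `G` is an ordered pair `(A,B)` of vertex sets with
`A ∪ B = V(G)` and no edge of `G` joining `A ∖ B` to `B ∖ A`.
Its separator is `A ∩ B` and its order is `|A ∩ B|`. -/
def IsSeparation {V : Type} (G : SimpleGraph V) (A B : Set V) : Prop :=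
  A ∪ B = Set.univ ∧ ∀ a ∈ A \ B, ∀ b ∈ B \ A, ¬ G.Adj a b

/-- An `X`–`Y` separation is a separation `(A,B)` with `X ⊆ A` and `Y ⊆ B`. -/
def IsXYSeparation {V : Type} (G : SimpleGraph V) (X Y A B : Set V) : Prop :=
  IsSeparation G A B ∧ X ⊆ A ∧ Y ⊆ B

section AuxStmt2

set_option linter.unusedSectionVars false

variable {V : Type} [Fintype V] {G : SimpleGraph V} {X Y : Set V}

/-- Nestedness of two separations, as used in the theorem. -/
def Nested2 (p q : Set V × Set V) : Prop :=
  (p.1 ⊆ q.1 ∧ q.2 ⊆ p.2) ∨ (q.1 ⊆ p.1 ∧ p.2 ⊆ q.2)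

lemma nested2_refl (p : Set V × Set V) : Nested2 p p :=
  Or.inl ⟨subset_rfl, subset_rfl⟩

lemma mem_left_of_sep {A B : Set V} (h : IsXYSeparation G X Y A B) {v : V}
    (hv : v ∉ B) : v ∈ A := by
  have h1 : v ∈ A ∪ B := h.1.1 ▸ Set.mem_univ v
  simp only [Set.mem_union] at h1
  tauto

/-- The "meet" of two X–Y separations is an X–Y separation. -/
lemma sep_meet {A B A' B' : Set V} (h : IsXYSeparation G X Y A B)
    (h' : IsXYSeparation G X Y A' B') :
    IsXYSeparation G X Y (A ∩ A') (B ∪ B') := by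
  obtain ⟨⟨hu, he⟩, hX, hY⟩ := h
  obtain ⟨⟨hu', he'⟩, hX', hY'⟩ := h'
  refine ⟨⟨?_, ?_⟩, fun x hx => ⟨hX hx, hX' hx⟩, fun y hy => Or.inl (hY hy)⟩
  · ext v
    have h1 : v ∈ A ∪ B := hu ▸ Set.mem_univ v
    have h2 : v ∈ A' ∪ B' := hu' ▸ Set.mem_univ v
    simp only [Set.mem_union, Set.mem_inter_iff, Set.mem_univ, iff_true] at *
    tauto
  · rintro a ⟨⟨haA, haA'⟩, haB⟩ b ⟨hbB, hbA⟩
    simp only [Set.mem_union, not_or] at haB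
    simp only [Set.mem_inter_iff, not_and] at hbA
    by_cases hbAm : b ∈ A
    · have hbB' : b ∈ B' := by
        have h2 : b ∈ A' ∪ B' := hu' ▸ Set.mem_univ b
        rcases h2 with h2 | h2
        · exact absurd h2 (hbA hbAm)
        · exact h2
      exact he' a ⟨haA', haB.2⟩ b ⟨hbB', hbA hbAm⟩
    · have hbBm : b ∈ B := by
        have h1 : b ∈ A ∪ B := hu ▸ Set.mem_univ b
        simp only [Set.mem_union] at h1
        tauto
      exact he a ⟨haA, haB.1⟩ b ⟨hbBm, hbAm⟩

/-- The "join" of two X–Y separations is an X–Y separation. -/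
lemma sep_join {A B A' B' : Set V} (h : IsXYSeparation G X Y A B)
    (h' : IsXYSeparation G X Y A' B') :
    IsXYSeparation G X Y (A ∪ A') (B ∩ B') := by
  obtain ⟨⟨hu, he⟩, hX, hY⟩ := h
  obtain ⟨⟨hu', he'⟩, hX', hY'⟩ := h'
  refine ⟨⟨?_, ?_⟩, fun x hx => Or.inl (hX hx), fun y hy => ⟨hY hy, hY' hy⟩⟩
  · ext v
    have h1 : v ∈ A ∪ B := hu ▸ Set.mem_univ v
    have h2 : v ∈ A' ∪ B' := hu' ▸ Set.mem_univ v
    simp only [Set.mem_union, Set.mem_inter_iff, Set.mem_univ, iff_true] at *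
    tauto
  · rintro a ⟨haA, haB⟩ b ⟨⟨hbB, hbB'⟩, hbA⟩
    simp only [Set.mem_inter_iff, not_and] at haB
    simp only [Set.mem_union, not_or] at hbA
    rcases haA with haAm | haAm'
    · by_cases haBm : a ∈ B
      · have haA' : a ∈ A' := by
          have h2 : a ∈ A' ∪ B' := hu' ▸ Set.mem_univ a
          simp only [Set.mem_union] at h2
          rcases h2 with h2 | h2
          · exact h2
          · exact absurd h2 (haB haBm)
        exact he' a ⟨haA', haB haBm⟩ b ⟨hbB', hbA.2⟩
      · exact he a ⟨haAm, haBm⟩ b ⟨hbB, hbA.1⟩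
    · by_cases haBm : a ∈ B'
      · have hanB : a ∉ B := fun hB => (haB hB) haBm
        have haAm : a ∈ A := by
          have h1 : a ∈ A ∪ B := hu ▸ Set.mem_univ a
          simp only [Set.mem_union] at h1
          tauto
        exact he a ⟨haAm, hanB⟩ b ⟨hbB, hbA.1⟩
      · exact he' a ⟨haAm', haBm⟩ b ⟨hbB', hbA.2⟩

/-- Submodularity: the corners of two minimum-order separations are minimum. -/
lemma corner_card {m : ℕ}
    (hmin : ∀ A B : Set V, IsXYSeparation G X Y A B → m ≤ (A ∩ B).ncard)
    {A B A' B' : Set V} (h : IsXYSeparation G X Y A B)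
    (h' : IsXYSeparation G X Y A' B')
    (hc : (A ∩ B).ncard = m) (hc' : (A' ∩ B').ncard = m) :
    ((A ∩ A') ∩ (B ∪ B')).ncard = m ∧ ((A ∪ A') ∩ (B ∩ B')).ncard = m := by
  set S₁ := (A ∩ A') ∩ (B ∪ B') with hS₁
  set S₂ := (A ∪ A') ∩ (B ∩ B') with hS₂
  have hsub : S₁.ncard + S₂.ncard ≤ (A ∩ B).ncard + (A' ∩ B').ncard := by
    have h1 : S₁ ∪ S₂ ⊆ (A ∩ B) ∪ (A' ∩ B') := by
      rintro v (⟨⟨h1, h2⟩, (h3 | h3)⟩ | ⟨(h1 | h1), h2, h3⟩) <;> tauto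
    have h2 : S₁ ∩ S₂ ⊆ (A ∩ B) ∩ (A' ∩ B') := by
      rintro v ⟨⟨⟨h1, h2⟩, _⟩, _, h3, h4⟩
      exact ⟨⟨h1, h3⟩, h2, h4⟩
    calc S₁.ncard + S₂.ncard = (S₁ ∪ S₂).ncard + (S₁ ∩ S₂).ncard :=
          (Set.ncard_union_add_ncard_inter S₁ S₂).symm
      _ ≤ ((A ∩ B) ∪ (A' ∩ B')).ncard + ((A ∩ B) ∩ (A' ∩ B')).ncard :=
          add_le_add (Set.ncard_le_ncard h1 (Set.toFinite _))
            (Set.ncard_le_ncard h2 (Set.toFinite _))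
      _ = (A ∩ B).ncard + (A' ∩ B').ncard :=
          Set.ncard_union_add_ncard_inter _ _
  have hm1 : m ≤ S₁.ncard := hmin _ _ (sep_meet h h')
  have hm2 : m ≤ S₂.ncard := hmin _ _ (sep_join h h')
  omega

/-- Nestedness with a third separation is preserved by meet and join. -/
lemma nested_meet_join {p p' q : Set V × Set V}
    (h : Nested2 p q) (h' : Nested2 p' q) :
    Nested2 (p.1 ∩ p'.1, p.2 ∪ p'.2) q ∧ Nested2 (p.1 ∪ p'.1, p.2 ∩ p'.2) q := by
  unfold Nested2 at *
  rcases h with ⟨h1, h2⟩ | ⟨h1, h2⟩ <;> rcases h' with ⟨h3, h4⟩ | ⟨h3, h4⟩ <;>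
    constructor <;> simp only [] <;>
    [skip; skip; skip; skip; skip; skip; skip; skip] <;>
    first
      | (left; constructor <;> intro x hx <;> simp_all <;> tauto)
      | (right; constructor <;> intro x hx <;> simp_all <;> tauto)

end AuxStmt2

section AuxStmt2b

set_option linter.unusedSectionVars false

variable {V : Type} [Fintype V] {G : SimpleGraph V} {X Y : Set V}

lemma nested2_symm {p q : Set V × Set V} (h : Nested2 p q) : Nested2 q p := by
  rcases h with ⟨h1, h2⟩ | ⟨h1, h2⟩
  · exact Or.inr ⟨h1, h2⟩
  · exact Or.inl ⟨h1, h2⟩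

/-- Given a nested family `S` of minimum separations and a minimum separation with
`z` in its separator, there is a minimum separation with `z` in its separator
nested with every member of `S`. -/
lemma ext_nested {m : ℕ}
    (hmin : ∀ A B : Set V, IsXYSeparation G X Y A B → m ≤ (A ∩ B).ncard)
    (S : Finset (Set V × Set V))
    (hGood : ∀ p ∈ S, IsXYSeparation G X Y p.1 p.2 ∧ (p.1 ∩ p.2).ncard = m)
    (hNest : ∀ p ∈ S, ∀ q ∈ S, Nested2 p q) :
    ∀ A B : Set V, IsXYSeparation G X Y A B → (A ∩ B).ncard = m → ∀ z ∈ A ∩ B,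
      ∃ C D : Set V, IsXYSeparation G X Y C D ∧ (C ∩ D).ncard = m ∧ z ∈ C ∩ D ∧
        ∀ q ∈ S, Nested2 (C, D) q := by
  classical
  induction S using Finset.induction_on with
  | empty =>
    intro A B hAB hc z hzm
    exact ⟨A, B, hAB, hc, hzm, by simp⟩
  | @insert q₀ S hq₀ IH =>
    intro A B hAB hc z hz
    obtain ⟨C, D, hCD, hcCD, hzCD, hnest⟩ :=
      IH (fun p hp => hGood p (Finset.mem_insert_of_mem hp))
        (fun p hp q hq => hNest p (Finset.mem_insert_of_mem hp) q (Finset.mem_insert_of_mem hq))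
        A B hAB hc z hz
    have hq₀good := hGood q₀ (Finset.mem_insert_self _ _)
    obtain ⟨hz1, hz2⟩ := hzCD
    by_cases hzq : z ∈ q₀.2
    · refine ⟨C ∪ q₀.1, D ∩ q₀.2, sep_join hCD hq₀good.1,
        (corner_card hmin hCD hq₀good.1 hcCD hq₀good.2).2,
        ⟨Or.inl hz1, hz2, hzq⟩, ?_⟩
      intro q hq
      rcases Finset.mem_insert.mp hq with rfl | hq
      · exact Or.inr ⟨Set.subset_union_right, Set.inter_subset_right⟩
      · exact (nested_meet_join (p := (C, D)) (p' := q₀) (hnest q hq)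
          (hNest q₀ (Finset.mem_insert_self _ _) q (Finset.mem_insert_of_mem hq))).2
    · have hzq1 : z ∈ q₀.1 := mem_left_of_sep hq₀good.1 hzq
      refine ⟨C ∩ q₀.1, D ∪ q₀.2, sep_meet hCD hq₀good.1,
        (corner_card hmin hCD hq₀good.1 hcCD hq₀good.2).1,
        ⟨⟨hz1, hzq1⟩, Or.inl hz2⟩, ?_⟩
      intro q hq
      rcases Finset.mem_insert.mp hq with rfl | hq
      · exact Or.inl ⟨Set.inter_subset_right, Set.subset_union_right⟩
      · exact (nested_meet_join (p := (C, D)) (p' := q₀) (hnest q hq)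
          (hNest q₀ (Finset.mem_insert_self _ _) q (Finset.mem_insert_of_mem hq))).1

lemma main_finset {m : ℕ}
    (hmin : ∀ A B : Set V, IsXYSeparation G X Y A B → m ≤ (A ∩ B).ncard)
    (T : Finset V)
    (hz : ∀ z ∈ T, ∃ A B : Set V, IsXYSeparation G X Y A B ∧ (A ∩ B).ncard = m ∧ z ∈ A ∩ B) :
    ∃ S : Finset (Set V × Set V),
      (∀ p ∈ S, IsXYSeparation G X Y p.1 p.2 ∧ (p.1 ∩ p.2).ncard = m) ∧
      (∀ p ∈ S, ∀ q ∈ S, Nested2 p q) ∧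
      ∀ z ∈ T, ∃ p ∈ S, z ∈ p.1 ∩ p.2 := by
  classical
  induction T using Finset.induction_on with
  | empty => exact ⟨∅, by simp, by simp, by simp⟩
  | @insert z T hzT IH =>
    obtain ⟨S, hGood, hNest, hcover⟩ := IH (fun w hw => hz w (Finset.mem_insert_of_mem hw))
    obtain ⟨A, B, hAB, hc, hzm⟩ := hz z (Finset.mem_insert_self _ _)
    obtain ⟨C, D, hCD, hcCD, hzCD, hnest⟩ := ext_nested hmin S hGood hNest A B hAB hc z hzm
    refine ⟨insert (C, D) S, ?_, ?_, ?_⟩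
    · intro p hp
      rcases Finset.mem_insert.mp hp with rfl | hp
      · exact ⟨hCD, hcCD⟩
      · exact hGood p hp
    · intro p hp q hq
      rcases Finset.mem_insert.mp hp with rfl | hp <;>
        rcases Finset.mem_insert.mp hq with rfl | hq
      · exact nested2_refl _
      · exact hnest q hq
      · exact nested2_symm (hnest p hp)
      · exact hNest p hp q hq
    · intro w hw
      rcases Finset.mem_insert.mp hw with rfl | hw
      · exact ⟨(C, D), Finset.mem_insert_self _ _, hzCD⟩
      · obtain ⟨p, hp, hwp⟩ := hcover w hw
        exact ⟨p, Finset.mem_insert_of_mem hp, hwp⟩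

end AuxStmt2b

/-- If every `z ∈ Z` lies in the separator of some `X`–`Y` separation of minimum
order `m`, then there is a nested set `S` of `X`–`Y` separations of order `m`
whose separators cover `Z`. -/
theorem stmt_2 {V : Type} [Fintype V] (G : SimpleGraph V) (X Y Z : Set V) (m : ℕ)
    (hmin : ∀ A B : Set V, IsXYSeparation G X Y A B → m ≤ (A ∩ B).ncard)
    (hz : ∀ z ∈ Z, ∃ A B : Set V, IsXYSeparation G X Y A B ∧ (A ∩ B).ncard = m ∧ z ∈ A ∩ B) :
    ∃ S : Set (Set V × Set V),
      (∀ p ∈ S, IsXYSeparation G X Y p.1 p.2 ∧ (p.1 ∩ p.2).ncard = m) ∧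
      (∀ p ∈ S, ∀ q ∈ S, (p.1 ⊆ q.1 ∧ q.2 ⊆ p.2) ∨ (q.1 ⊆ p.1 ∧ p.2 ⊆ q.2)) ∧
      Z ⊆ ⋃ p ∈ S, (p.1 ∩ p.2) := by
  classical
  obtain ⟨S, hGood, hNest, hcover⟩ := main_finset hmin Z.toFinset
    (fun z hzT => hz z (Set.mem_toFinset.mp hzT))
  refine ⟨↑S, fun p hp => hGood p hp, fun p hp q hq => hNest p hp q hq, ?_⟩
  intro z hzZ
  obtain ⟨p, hp, hzp⟩ := hcover z (Set.mem_toFinset.mpr hzZ)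
  simp only [Set.mem_iUnion]
  exact ⟨p, hp, hzp⟩
end

section
/- For every integer k ≥ 2, the graph obtained from the complete graph K_{3k−1} by deleting the edges of a matching of size k is (3k−3)-connected but is not k-linked. -/
/-- A graph `G` is `k`-linked if it has at least `2k` vertices and for every
choice of `2k` distinct vertices `s₁, …, s_k, t₁, …, t_k` there are pairwise
vertex-disjoint paths `P₁, …, P_k` with `P_i` joining `s_i` to `t_i`. -/
def IsLinked {V : Type} [Fintype V] (G : SimpleGraph V) (k : ℕ) : Prop :=
  2 * k ≤ Fintype.card V ∧
    ∀ s t : Fin k → V, Function.Injective (Sum.elim s t) →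
      ∃ P : (i : Fin k) → G.Walk (s i) (t i),
        (∀ i, (P i).IsPath) ∧
        ∀ i j, i ≠ j → ∀ v, v ∈ (P i).support → v ∉ (P j).support

/-- A graph `G` is `m`-connected if it has more than `m` vertices and deleting
any set of fewer than `m` vertices leaves it connected. -/
def IsKConnected {V : Type} [Fintype V] (G : SimpleGraph V) (k : ℕ) : Prop :=
  k < Fintype.card V ∧
    ∀ S : Finset V, S.card < k → (G.induce ((↑S : Set V)ᶜ)).Connected

/-- `x` and `y` form the `i`-th matching edge (the pair `{2i, 2i+1}`). -/
def MatchedPair (k : ℕ) (x y : Fin (3 * k - 1)) : Prop :=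
  ∃ i : ℕ, i < k ∧ (x : ℕ) = 2 * i ∧ (y : ℕ) = 2 * i + 1

/-- The graph obtained from the complete graph `K_{3k-1}` by deleting the edges
of a matching of size `k` (the pairs `{2i, 2i+1}` for `i < k`). -/
def cliqueMinusMatching (k : ℕ) : SimpleGraph (Fin (3 * k - 1)) :=
  SimpleGraph.fromRel (fun x y => ¬ (MatchedPair k x y ∨ MatchedPair k y x))

/-- Adjacency in `cliqueMinusMatching`. -/
lemma cmm_adj (k : ℕ) (x y : Fin (3 * k - 1)) :
    (cliqueMinusMatching k).Adj x y ↔ x ≠ y ∧ ¬ (MatchedPair k x y ∨ MatchedPair k y x) := by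
  simp only [cliqueMinusMatching, SimpleGraph.fromRel_adj]
  tauto

/-- Each vertex has a unique matching partner. -/
lemma partner_eq {k : ℕ} {x y z : Fin (3 * k - 1)}
    (hy : MatchedPair k x y ∨ MatchedPair k y x)
    (hz : MatchedPair k x z ∨ MatchedPair k z x) : y = z := by
  obtain hy | hy := hy <;> obtain hz | hz := hz <;>
    obtain ⟨i, hi, h1, h2⟩ := hy <;> obtain ⟨j, hj, h3, h4⟩ := hz <;>
    exact Fin.ext (by omega)

/-- Non-adjacent distinct vertices form a matched pair. -/
lemma cmm_nonadj {k : ℕ} {x y : Fin (3 * k - 1)} (hxy : x ≠ y)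
    (h : ¬ (cliqueMinusMatching k).Adj x y) :
    MatchedPair k x y ∨ MatchedPair k y x := by
  rw [cmm_adj] at h; tauto

/-- A walk between distinct non-adjacent vertices has an internal vertex. -/
lemma exists_internal {V : Type} {G : SimpleGraph V} {a b : V} (p : G.Walk a b)
    (hnadj : ¬ G.Adj a b) (hne : a ≠ b) :
    ∃ v, v ∈ p.support ∧ v ≠ a ∧ v ≠ b := by
  cases p with
  | nil => exact absurd rfl hne
  | @cons _ w _ h q =>
    refine ⟨w, ?_, h.ne', ?_⟩
    · simp [SimpleGraph.Walk.support_cons, q.start_mem_support]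
    · rintro rfl; exact hnadj h

/-- For `k ≥ 2`, the graph `K_{3k-1}` minus a matching of size `k` is
`(3k-3)`-connected but not `k`-linked. -/
theorem stmt_5 (k : ℕ) (hk : 2 ≤ k) :
    IsKConnected (cliqueMinusMatching k) (3 * k - 3) ∧
      ¬ IsLinked (cliqueMinusMatching k) k := by
  constructor
  · -- (3k-3)-connectedness
    constructor
    · simp only [Fintype.card_fin]; omega
    · intro S hS
      have hcard : 3 ≤ Sᶜ.card := by
        have := Finset.card_compl S
        have h2 := S.card_le_univ
        simp only [Fintype.card_fin] at this
        omega
      rw [SimpleGraph.connected_iff]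
      have hz3 : ∀ a b : Fin (3*k-1), ∃ z, z ∉ S ∧ z ≠ a ∧ z ≠ b := by
        intro a b
        have : (Sᶜ \ {a, b}).Nonempty := by
          rw [← Finset.card_pos]
          have h1 : (Sᶜ \ {a, b}).card ≥ Sᶜ.card - ({a,b} : Finset _).card :=
            Finset.le_card_sdiff _ _
          have h2 : ({a, b} : Finset (Fin (3*k-1))).card ≤ 2 :=
            (Finset.card_insert_le _ _).trans (by simp)
          omega
        obtain ⟨z, hz⟩ := this
        simp only [Finset.mem_sdiff, Finset.mem_compl, Finset.mem_insert,
          Finset.mem_singleton, not_or] at hz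
        exact ⟨z, hz.1, hz.2.1, hz.2.2⟩
      constructor
      · rintro ⟨a, ha⟩ ⟨b, hb⟩
        simp only [Set.mem_compl_iff, Finset.mem_coe] at ha hb
        by_cases hab : a = b
        · subst hab; rfl
        by_cases hadj : (cliqueMinusMatching k).Adj a b
        · exact SimpleGraph.Adj.reachable (by simpa using hadj)
        · obtain ⟨z, hzS, hza, hzb⟩ := hz3 a b
          have hrel : MatchedPair k a b ∨ MatchedPair k b a := cmm_nonadj hab hadj
          have h1 : (cliqueMinusMatching k).Adj a z := by
            by_contra h
            exact hzb (partner_eq hrel (cmm_nonadj (Ne.symm hza) h)).symm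
          have h2 : (cliqueMinusMatching k).Adj z b := by
            by_contra h
            have hrel' : MatchedPair k b a ∨ MatchedPair k a b := hrel.symm
            have := cmm_nonadj hzb h
            exact hza (partner_eq hrel' (by tauto)).symm
          have r1 : ((cliqueMinusMatching k).induce ((↑S : Set (Fin (3*k-1)))ᶜ)).Adj
              ⟨a, ha⟩ ⟨z, hzS⟩ := by simpa using h1
          have r2 : ((cliqueMinusMatching k).induce ((↑S : Set (Fin (3*k-1)))ᶜ)).Adj
              ⟨z, hzS⟩ ⟨b, hb⟩ := by simpa using h2
          exact r1.reachable.trans r2.reachable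
      · obtain ⟨z, hzS, _, _⟩ := hz3 ⟨0, by omega⟩ ⟨0, by omega⟩
        exact ⟨⟨z, hzS⟩⟩
  · -- not k-linked
    rintro ⟨-, h⟩
    set s : Fin k → Fin (3*k-1) := fun i => ⟨2 * i.val, by have := i.isLt; omega⟩ with hs
    set t : Fin k → Fin (3*k-1) := fun i => ⟨2 * i.val + 1, by have := i.isLt; omega⟩ with ht
    have sv : ∀ i : Fin k, (s i : ℕ) = 2 * i.val := fun i => rfl
    have tv : ∀ i : Fin k, (t i : ℕ) = 2 * i.val + 1 := fun i => rfl
    have hinj : Function.Injective (Sum.elim s t) := by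
      rintro (i | i) (j | j) hij <;>
        simp only [Sum.elim_inl, Sum.elim_inr] at hij <;>
        have h' := congrArg Fin.val hij
      · rw [sv i, sv j] at h'; exact congrArg Sum.inl (Fin.ext (by omega))
      · rw [sv i, tv j] at h'; exact absurd h' (by omega)
      · rw [tv i, sv j] at h'; exact absurd h' (by omega)
      · rw [tv i, tv j] at h'; exact congrArg Sum.inr (Fin.ext (by omega))
    obtain ⟨P, hP, hdisj⟩ := h s t hinj
    have hst : ∀ i : Fin k, ¬ (cliqueMinusMatching k).Adj (s i) (t i) := by
      intro i hadj
      rw [cmm_adj] at hadj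
      exact hadj.2 (Or.inl ⟨i.val, i.isLt, rfl, rfl⟩)
    have hstne : ∀ i : Fin k, s i ≠ t i := by
      intro i e
      have : (s i : ℕ) = (t i : ℕ) := congrArg Fin.val e
      simp [hs, ht] at this
    have H : ∀ i, ∃ v, v ∈ (P i).support ∧ v ≠ s i ∧ v ≠ t i :=
      fun i => exists_internal (P i) (hst i) (hstne i)
    choose v hvmem hvs hvt using H
    have hf : Function.Injective (Sum.elim s (Sum.elim t v)) := by
      rintro (i | i | i) (j | j | j) hij <;>
        simp only [Sum.elim_inl, Sum.elim_inr] at hij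
      · have h' := congrArg Fin.val hij
        rw [sv i, sv j] at h'; exact congrArg Sum.inl (Fin.ext (by omega))
      · have h' := congrArg Fin.val hij
        rw [sv i, tv j] at h'; exact absurd h' (by omega)
      · exfalso
        rcases eq_or_ne i j with rfl | hne
        · exact hvs i hij.symm
        · have hm : s i ∈ (P j).support := by rw [hij]; exact hvmem j
          exact hdisj i j hne (s i) (P i).start_mem_support hm
      · have h' := congrArg Fin.val hij
        rw [tv i, sv j] at h'; exact absurd h' (by omega)
      · have h' := congrArg Fin.val hij
        rw [tv i, tv j] at h'
        exact congrArg (fun x => Sum.inr (Sum.inl x)) (Fin.ext (by omega))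
      · exfalso
        rcases eq_or_ne i j with rfl | hne
        · exact hvt i hij.symm
        · have hm : t i ∈ (P j).support := by rw [hij]; exact hvmem j
          exact hdisj i j hne (t i) (P i).end_mem_support hm
      · exfalso
        rcases eq_or_ne i j with rfl | hne
        · exact hvs i hij
        · have hm : v i ∈ (P j).support := by rw [hij]; exact (P j).start_mem_support
          exact hdisj i j hne (v i) (hvmem i) hm
      · exfalso
        rcases eq_or_ne i j with rfl | hne
        · exact hvt i hij
        · have hm : v i ∈ (P j).support := by rw [hij]; exact (P j).end_mem_support
          exact hdisj i j hne (v i) (hvmem i) hm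
      · rcases eq_or_ne i j with rfl | hne
        · rfl
        · exfalso
          have hm : v i ∈ (P j).support := by rw [hij]; exact hvmem j
          exact hdisj i j hne (v i) (hvmem i) hm
    have hcard := Fintype.card_le_of_injective _ hf
    simp only [Fintype.card_sum, Fintype.card_fin] at hcard
    omega
end

section
/- For any two distinct vertex sets X and Y of the same size k in a finite connected graph H, and any marginal set A ⊆ V(H), there is a balanced X–Y movement of length at most k on H such that every vertex of A is strongly singular with respect to this movement. -/
/-- A movement of length `n` on a graph `H` (moves are nontrivial paths encoded
by their vertex lists). -/
def IsMovement {V : Type} [DecidableEq V] (H : SimpleGraph V) (n : ℕ)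
    (X : ℕ → Finset V) (M : ℕ → List V) : Prop :=
  ∀ i < n,
    (M i).Chain' H.Adj ∧ (M i).Nodup ∧ 2 ≤ (M i).length ∧
    (∃ u v : V, u ≠ v ∧ (M i).head? = some u ∧ (M i).getLast? = some v ∧
      symmDiff (X i) (X (i + 1)) = {u, v}) ∧
    (∀ w ∈ M i, w ∉ X i ∩ X (i + 1))

/-- A movement is balanced if in each move exactly one token leaves the old
configuration and exactly one vertex enters the new one (equivalently, the
induced pairing is a perfect matching from `X₀` to `Xₙ`). -/
def BalancedMovement {V : Type} [DecidableEq V] (n : ℕ) (X : ℕ → Finset V) : Prop :=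
  ∀ i < n, (X i \ X (i + 1)).card = 1 ∧ (X (i + 1) \ X i).card = 1

/-- A vertex `x` is strongly singular with respect to a movement of length `n`
if no move contains `x` as an inner vertex and `{i : x ∈ X i}` is an integer
interval that is empty or contains `0` or `n`. -/
def StronglySingular {V : Type} [DecidableEq V] (n : ℕ) (X : ℕ → Finset V)
    (M : ℕ → List V) (x : V) : Prop :=
  (∀ i < n, x ∈ M i → (M i).head? = some x ∨ (M i).getLast? = some x) ∧
  (∀ i j l : ℕ, i ≤ j → j ≤ l → l ≤ n → x ∈ X i → x ∈ X l → x ∈ X j) ∧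
  ((∀ i ≤ n, x ∉ X i) ∨ x ∈ X 0 ∨ x ∈ X n)

/-- A set `A` of vertices is marginal in `H` if `H − A` is connected and every
vertex of `A` has a neighbour outside `A`. -/
def IsMarginal {V : Type} (H : SimpleGraph V) (A : Set V) : Prop :=
  (H.induce Aᶜ).Connected ∧ ∀ a ∈ A, ∃ b, b ∉ A ∧ H.Adj a b


open SimpleGraph

section Aux
variable {V : Type} [DecidableEq V]

def Deg1 (G : SimpleGraph V) (v : V) : Prop := ∀ y z : V, G.Adj v y → G.Adj v z → y = z

def ConnOn (G : SimpleGraph V) (U : Finset V) : Prop :=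
  ∀ x ∈ U, ∀ y ∈ U, ∃ p : G.Walk x y, p.IsPath ∧ ∀ w ∈ p.support, w ∈ U

lemma walk_head? {G : SimpleGraph V} {u v : V} (p : G.Walk u v) :
    p.support.head? = some u := by
  rw [p.support_eq_cons]; rfl

lemma walk_getLast? {G : SimpleGraph V} {u v : V} (p : G.Walk u v) :
    p.support.getLast? = some v := by
  rw [← List.head?_reverse, ← Walk.support_reverse]; exact walk_head? _

lemma deg1_head_or_getLast {G : SimpleGraph V} {L : List V} (hc : L.Chain' G.Adj)
    (hn : L.Nodup) {w : V} (hw : w ∈ L) (hd : Deg1 G w) :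
    L.head? = some w ∨ L.getLast? = some w := by
  obtain ⟨l₁, l₂, rfl⟩ := List.append_of_mem hw
  by_cases h1 : l₁ = []
  · subst h1; left; rfl
  by_cases h2 : l₂ = []
  · subst h2; right
    exact List.getLast?_concat
  · exfalso
    obtain ⟨hc1, hc2, hmid⟩ := List.isChain_append.mp hc
    have hadj1 : G.Adj (l₁.getLast h1) w := by
      apply hmid
      · exact List.getLast?_eq_getLast h1 ▸ rfl
      · rfl
    obtain ⟨b, l₂', rfl⟩ := List.exists_cons_of_ne_nil h2
    have hadj2 : G.Adj w b := (List.isChain_cons.mp hc2).1 b rfl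
    have hab : l₁.getLast h1 = b := hd _ _ hadj1.symm hadj2
    have hdisj := (List.nodup_append'.mp hn).2.2
    exact hdisj (l₁.getLast_mem h1) (by rw [hab]; exact List.mem_cons_of_mem _ List.mem_cons_self)

lemma symmDiff_insert_insert {s t : Finset V} {ℓ : V} (hs : ℓ ∉ s) (ht : ℓ ∉ t) :
    symmDiff (insert ℓ s) (insert ℓ t) = symmDiff s t := by
  ext x
  by_cases hx : x = ℓ
  · subst hx; simp [Finset.mem_symmDiff, hs, ht]
  · simp [Finset.mem_symmDiff, Finset.mem_insert, hx]

lemma insert_sdiff_insert' {s t : Finset V} {ℓ : V} (hs : ℓ ∉ s) :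
    (insert ℓ s) \ (insert ℓ t) = s \ t := by
  ext x
  by_cases hx : x = ℓ
  · subst hx; simp [hs]
  · simp [Finset.mem_sdiff, Finset.mem_insert, hx]

lemma symmDiff_move {S : Finset V} {s ℓ : V} (hs : s ∈ S) (hℓ : ℓ ∉ S) :
    symmDiff S (insert ℓ (S.erase s)) = {s, ℓ} := by
  have hsl : s ≠ ℓ := fun h => hℓ (h ▸ hs)
  ext x
  simp only [Finset.mem_symmDiff, Finset.mem_insert, Finset.mem_erase, Finset.mem_singleton]
  constructor
  · rintro (⟨hxS, hx⟩ | ⟨(rfl | ⟨hxs, hxS⟩), hx⟩)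
    · left
      by_contra hxs
      exact hx (Or.inr ⟨fun h => hxs (by simp [h, hxs]), hxS⟩)
    · right; rfl
    · exact absurd hxS hx
  · rintro (rfl | rfl)
    · left
      refine ⟨hs, ?_⟩
      rintro (rfl | ⟨h, _⟩)
      · exact hℓ hs
      · exact h rfl
    · right
      exact ⟨Or.inl rfl, hℓ⟩

lemma sdiff_move1 {S : Finset V} {s ℓ : V} (hs : s ∈ S) (hℓ : ℓ ∉ S) :
    S \ (insert ℓ (S.erase s)) = {s} := by
  ext x
  simp only [Finset.mem_sdiff, Finset.mem_insert, Finset.mem_erase, Finset.mem_singleton]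
  constructor
  · rintro ⟨hxS, hx⟩
    by_contra hxs
    exact hx (Or.inr ⟨hxs, hxS⟩)
  · rintro rfl
    refine ⟨hs, ?_⟩
    rintro (rfl | ⟨h, _⟩)
    · exact hℓ hs
    · exact h rfl

lemma sdiff_move2 {S : Finset V} {s ℓ : V} (hs : s ∈ S) (hℓ : ℓ ∉ S) :
    (insert ℓ (S.erase s)) \ S = {ℓ} := by
  ext x
  simp only [Finset.mem_sdiff, Finset.mem_insert, Finset.mem_erase, Finset.mem_singleton]
  constructor
  · rintro ⟨rfl | ⟨_, hxS⟩, hx⟩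
    · rfl
    · exact absurd hxS hx
  · rintro rfl
    exact ⟨Or.inl rfl, hℓ⟩




lemma exists_min_path_to (G : SimpleGraph V) {U : Finset V} (hU : ConnOn G U)
    {x : V} (hx : x ∈ U) {Q : Finset V} {q₀ : V} (hq₀ : q₀ ∈ Q) (hq₀U : q₀ ∈ U) :
    ∃ s ∈ Q, ∃ p : G.Walk x s, p.IsPath ∧ (∀ w ∈ p.support, w ∈ U) ∧
      (∀ w ∈ p.support, w ∈ Q → w = s) := by
  classical
  have hex : ∃ n : ℕ, ∃ s ∈ Q, ∃ p : G.Walk x s, p.IsPath ∧ (∀ w ∈ p.support, w ∈ U) ∧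
      p.length = n := by
    obtain ⟨p, hp, hpU⟩ := hU x hx q₀ hq₀U
    exact ⟨p.length, q₀, hq₀, p, hp, hpU, rfl⟩
  obtain ⟨s, hsQ, p, hp, hpU, hplen⟩ := Nat.find_spec hex
  refine ⟨s, hsQ, p, hp, hpU, ?_⟩
  intro w hw hwQ
  by_contra hws
  have hkey : ∃ s' ∈ Q, ∃ p' : G.Walk x s', p'.IsPath ∧ (∀ u ∈ p'.support, u ∈ U) ∧
      p'.length = (p.takeUntil w hw).length :=
    ⟨w, hwQ, p.takeUntil w hw, hp.takeUntil hw,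
      fun u hu => hpU u (p.support_takeUntil_subset hw hu), rfl⟩
  have hlt : (p.takeUntil w hw).length < p.length := by
    have hspec := p.take_spec hw
    have hlen : (p.takeUntil w hw).length + (p.dropUntil w hw).length = p.length := by
      rw [← Walk.length_append, hspec]
    have : (p.dropUntil w hw).length ≠ 0 := fun h => hws (Walk.eq_of_length_eq_zero h)
    omega
  have h1 : Nat.find hex ≤ (p.takeUntil w hw).length := Nat.find_le hkey
  omega

lemma exists_removable (G : SimpleGraph V) {U : Finset V} (hU : ConnOn G U)
    (h2 : 2 ≤ U.card) : ∃ ℓ ∈ U, ConnOn G (U.erase ℓ) := by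
  classical
  have hne : U.Nonempty := Finset.card_pos.mp (by omega)
  obtain ⟨w₀, hw₀⟩ := hne
  have hex : ∀ x ∈ U, ∃ n : ℕ, ∃ p : G.Walk w₀ x, p.IsPath ∧ (∀ w ∈ p.support, w ∈ U) ∧
      p.length = n := by
    intro x hx
    obtain ⟨p, hp, hpU⟩ := hU w₀ hw₀ x hx
    exact ⟨p.length, p, hp, hpU, rfl⟩
  set f : V → ℕ := fun x => if hx : x ∈ U then Nat.find (hex x hx) else 0 with hf
  obtain ⟨ℓ, hℓU, hmax⟩ := U.exists_max_image f ⟨w₀, hw₀⟩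
  -- f w₀ = 0
  have hfw₀ : f w₀ = 0 := by
    rw [hf]; simp only [dif_pos hw₀]
    exact Nat.le_zero.mp (Nat.find_le ⟨Walk.nil, by simp [hw₀]⟩)
  -- ℓ ≠ w₀
  obtain ⟨u, huU, huw⟩ := Finset.exists_mem_ne (show 1 < U.card by omega) w₀
  have hfu : 0 < f u := by
    rw [hf]; simp only [dif_pos huU]
    rcases Nat.eq_zero_or_pos (Nat.find (hex u huU)) with h | h
    swap
    · exact h
    · exfalso
      obtain ⟨p, _, _, hplen⟩ := Nat.find_spec (hex u huU)
      exact huw (Walk.eq_of_length_eq_zero (hplen.trans h)).symm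
  have hℓw₀ : ℓ ≠ w₀ := by
    intro h
    have := hmax u huU
    rw [h, hfw₀] at this
    omega
  -- key: short paths from w₀ avoid ℓ
  have key : ∀ x ∈ U, x ≠ ℓ → ∃ p : G.Walk w₀ x, p.IsPath ∧
      ∀ w ∈ p.support, w ∈ U.erase ℓ := by
    intro x hxU hxℓ
    obtain ⟨p, hp, hpU, hplen⟩ := Nat.find_spec (hex x hxU)
    refine ⟨p, hp, fun w hw => Finset.mem_erase.mpr ⟨?_, hpU w hw⟩⟩
    intro hwℓ
    subst hwℓ
    -- w = ℓ on a shortest path to x, w ≠ x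
    have hq : ∃ n : ℕ, ∃ q : G.Walk w₀ w, q.IsPath ∧ (∀ u ∈ q.support, u ∈ U) ∧
        q.length = n :=
      ⟨(p.takeUntil w hw).length, p.takeUntil w hw, hp.takeUntil hw,
        fun u hu => hpU u (p.support_takeUntil_subset hw hu), rfl⟩
    have hfind : Nat.find (hex w hℓU) ≤ (p.takeUntil w hw).length := by
      apply Nat.find_le
      exact ⟨p.takeUntil w hw, hp.takeUntil hw,
        fun u hu => hpU u (p.support_takeUntil_subset hw hu), rfl⟩
    have hlt : (p.takeUntil w hw).length < p.length := by
      have hlen : (p.takeUntil w hw).length + (p.dropUntil w hw).length = p.length := by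
        rw [← Walk.length_append, p.take_spec hw]
      have : (p.dropUntil w hw).length ≠ 0 := fun h =>
        hxℓ (Walk.eq_of_length_eq_zero h).symm
      omega
    have hmax' := hmax x hxU
    rw [hf] at hmax'
    simp only [dif_pos hxU, dif_pos hℓU] at hmax'
    omega
  refine ⟨ℓ, hℓU, ?_⟩
  intro x hx y hy
  obtain ⟨hxℓ, hxU⟩ := Finset.mem_erase.mp hx
  obtain ⟨hyℓ, hyU⟩ := Finset.mem_erase.mp hy
  obtain ⟨px, _, hpxU⟩ := key x hxU hxℓ
  obtain ⟨py, _, hpyU⟩ := key y hyU hyℓ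
  set t := px.reverse.append py with ht
  refine ⟨t.bypass, t.bypass_isPath, fun w hw => ?_⟩
  have hw' := t.support_bypass_subset hw
  rw [ht, Walk.mem_support_append_iff] at hw'
  rcases hw' with h | h
  · rw [Walk.support_reverse, List.mem_reverse] at h
    exact hpxU w h
  · exact hpyU w h

set_option linter.unusedSectionVars false in
def MoveOn (G : SimpleGraph V) (U : Finset V) (n : ℕ)
    (X : ℕ → Finset V) (M : ℕ → List V) : Prop :=
  ∀ i < n,
    (M i).Chain' G.Adj ∧ (M i).Nodup ∧ 2 ≤ (M i).length ∧
    (∃ u v : V, u ≠ v ∧ (M i).head? = some u ∧ (M i).getLast? = some v ∧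
      symmDiff (X i) (X (i + 1)) = {u, v}) ∧
    (∀ w ∈ M i, w ∉ X i ∩ X (i + 1)) ∧ (∀ w ∈ M i, w ∈ U)

lemma moveOn_mono {G : SimpleGraph V} {U U' : Finset V} {n : ℕ}
    {Xs : ℕ → Finset V} {M : ℕ → List V} (hUU : U' ⊆ U)
    (h : MoveOn G U' n Xs M) : MoveOn G U n Xs M := by
  intro i hi
  obtain ⟨c, nd, len, ex, av, inU⟩ := h i hi
  exact ⟨c, nd, len, ex, av, fun w hw => hUU (inU w hw)⟩

lemma moveOn_lift {G : SimpleGraph V} {U : Finset V} {n : ℕ}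
    {Xs : ℕ → Finset V} {M : ℕ → List V} {ℓ : V}
    (h : MoveOn G U n Xs M) (hX : ∀ i ≤ n, ℓ ∉ Xs i) (hM : ∀ i < n, ℓ ∉ M i) :
    MoveOn G U n (fun i => insert ℓ (Xs i)) M := by
  intro i hi
  obtain ⟨c, nd, len, ⟨u, v, huv, h1, h2, h3⟩, av, inU⟩ := h i hi
  refine ⟨c, nd, len, ⟨u, v, huv, h1, h2, ?_⟩, ?_, inU⟩
  · rw [symmDiff_insert_insert (hX i (le_of_lt hi)) (hX (i+1) hi)]
    exact h3
  · intro w hw hmem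
    rw [Finset.mem_inter, Finset.mem_insert, Finset.mem_insert] at hmem
    obtain ⟨h4 | h4, h5 | h5⟩ := hmem
    · exact hM i hi (h4 ▸ hw)
    · exact hM i hi (h4 ▸ hw)
    · exact hM i hi (h5 ▸ hw)
    · exact av w hw (Finset.mem_inter.mpr ⟨h4, h5⟩)

theorem mainLemma (G : SimpleGraph V) :
    ∀ N : ℕ, ∀ U S T : Finset V, U.card ≤ N → S ⊆ U → T ⊆ U → S.card = T.card →
    ConnOn G U →
    ∃ n, n ≤ S.card ∧ ∃ Xs : ℕ → Finset V, ∃ M : ℕ → List V,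
      MoveOn G U n Xs M ∧ Xs 0 = S ∧ Xs n = T ∧ BalancedMovement n Xs ∧
      (∀ i ≤ n, Xs i ⊆ S ∪ T) ∧
      (∀ v, Deg1 G v → ∀ i j l : ℕ, i ≤ j → j ≤ l → l ≤ n →
        v ∈ Xs i → v ∈ Xs l → v ∈ Xs j) := by
  intro N
  induction N with
  | zero =>
    intro U S T hUN hS hT hcard hconn
    have hU0 : U = ∅ := Finset.card_eq_zero.mp (Nat.le_zero.mp hUN)
    have hS0 : S = ∅ := Finset.eq_empty_of_forall_notMem fun x hx => by
      simp [hU0] at hS; simp [hS] at hx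
    have hT0 : T = ∅ := Finset.eq_empty_of_forall_notMem fun x hx => by
      simp [hU0] at hT; simp [hT] at hx
    subst hS0
    refine ⟨0, Nat.zero_le _, fun _ => ∅, fun _ => [], ?_, rfl, hT0.symm, ?_, ?_, ?_⟩
    · intro i hi; omega
    · intro i hi; omega
    · intro i _; exact Finset.empty_subset _
    · intro v _ i j l _ _ hl h1 _; simp at h1
  | succ N ih =>
    intro U S T hUN hS hT hcard hconn
    by_cases hST : S = T
    · subst hST
      refine ⟨0, Nat.zero_le _, fun _ => S, fun _ => [], ?_, rfl, rfl, ?_, ?_, ?_⟩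
      · intro i hi; omega
      · intro i hi; omega
      · intro i _; exact Finset.subset_union_left
      · intro v _ i j l _ _ _ h1 _; exact h1
    · -- S ≠ T
      have hSnT : ∃ s₀ ∈ S, s₀ ∉ T := by
        by_contra h
        push_neg at h
        exact hST (Finset.eq_of_subset_of_card_le h hcard.ge)
      have hTnS : ∃ t₀ ∈ T, t₀ ∉ S := by
        by_contra h
        push_neg at h
        exact hST (Finset.eq_of_subset_of_card_le h hcard.le).symm
      obtain ⟨s₀, hs₀S, hs₀T⟩ := hSnT
      obtain ⟨t₀, ht₀T, ht₀S⟩ := hTnS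
      have hU2 : 2 ≤ U.card := by
        rw [show (2 : ℕ) = 1 + 1 by rfl]
        apply Finset.one_lt_card.mpr
        exact ⟨s₀, hS hs₀S, t₀, hT ht₀T, fun h => hs₀T (h ▸ ht₀T)⟩
      obtain ⟨ℓ, hℓU, hconn'⟩ := exists_removable G hconn hU2
      have hU' : (U.erase ℓ).card ≤ N := by
        rw [Finset.card_erase_of_mem hℓU]; omega
      by_cases hℓS : ℓ ∈ S <;> by_cases hℓT : ℓ ∈ T
      · -- case b : ℓ ∈ S ∩ T
        have hS' : S.erase ℓ ⊆ U.erase ℓ := fun x hx => by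
          rw [Finset.mem_erase] at hx ⊢
          exact ⟨hx.1, hS hx.2⟩
        have hT' : T.erase ℓ ⊆ U.erase ℓ := fun x hx => by
          rw [Finset.mem_erase] at hx ⊢
          exact ⟨hx.1, hT hx.2⟩
        have hcard' : (S.erase ℓ).card = (T.erase ℓ).card := by
          rw [Finset.card_erase_of_mem hℓS, Finset.card_erase_of_mem hℓT, hcard]
        obtain ⟨n, hn, Xs, M, hmv, h0, hlast, hbal, hconf, hint⟩ :=
          ih (U.erase ℓ) _ _ hU' hS' hT' hcard' hconn'
        have hℓX : ∀ i ≤ n, ℓ ∉ Xs i := by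
          intro i hi hmem
          rcases Finset.mem_union.mp (hconf i hi hmem) with h | h
          · exact (Finset.mem_erase.mp h).1 rfl
          · exact (Finset.mem_erase.mp h).1 rfl
        have hℓM : ∀ i < n, ℓ ∉ M i := by
          intro i hi hmem
          obtain ⟨_, _, _, _, _, inU⟩ := hmv i hi
          exact (Finset.mem_erase.mp (inU ℓ hmem)).1 rfl
        refine ⟨n, ?_, fun i => insert ℓ (Xs i), M, ?_, ?_, ?_, ?_, ?_, ?_⟩
        · rw [Finset.card_erase_of_mem hℓS] at hn; omega
        · exact moveOn_mono (Finset.erase_subset ℓ U) (moveOn_lift hmv hℓX hℓM)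
        · show insert ℓ (Xs 0) = S
          rw [h0, Finset.insert_erase hℓS]
        · show insert ℓ (Xs n) = T
          rw [hlast, Finset.insert_erase hℓT]
        · intro i hi
          have hb := hbal i hi
          show (insert ℓ (Xs i) \ insert ℓ (Xs (i+1))).card = 1 ∧
            (insert ℓ (Xs (i+1)) \ insert ℓ (Xs i)).card = 1
          rw [insert_sdiff_insert' (hℓX i (le_of_lt hi)),
            insert_sdiff_insert' (hℓX (i+1) hi)]
          exact hb
        · intro i hi x hx
          rcases Finset.mem_insert.mp hx with rfl | hx
          · exact Finset.mem_union_left _ hℓS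
          · rcases Finset.mem_union.mp (hconf i hi hx) with h | h
            · exact Finset.mem_union_left _ (Finset.mem_of_mem_erase h)
            · exact Finset.mem_union_right _ (Finset.mem_of_mem_erase h)
        · intro v hv i j l hij hjl hln h1 h2
          by_cases hvℓ : v = ℓ
          · subst hvℓ; exact Finset.mem_insert_self _ _
          · rcases Finset.mem_insert.mp h1 with h1' | h1'
            · exact absurd h1' hvℓ
            rcases Finset.mem_insert.mp h2 with h2' | h2'
            · exact absurd h2' hvℓ
            exact Finset.mem_insert_of_mem (hint v hv i j l hij hjl hln h1' h2')
      · -- case d : ℓ ∈ S \\ T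
        classical
        have ht₀Q : t₀ ∈ T.filter (fun v => ¬(Deg1 G v ∧ v ∈ S)) :=
          Finset.mem_filter.mpr ⟨ht₀T, fun h => ht₀S h.2⟩
        obtain ⟨t, htQ, p, hpath, hpU, hpQ⟩ :=
          exists_min_path_to G hconn hℓU ht₀Q (hT ht₀T)
        have htT : t ∈ T := (Finset.mem_filter.mp htQ).1
        have htNS : ¬(Deg1 G t ∧ t ∈ S) := (Finset.mem_filter.mp htQ).2
        have htℓ : t ≠ ℓ := fun h => hℓT (h ▸ htT)
        have hsupT : ∀ w ∈ p.support, w ∈ T → w = t := by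
          intro w hw hwT
          by_contra hwt
          have hwD : Deg1 G w ∧ w ∈ S := by
            by_contra hD
            exact hwt (hpQ w hw (Finset.mem_filter.mpr ⟨hwT, hD⟩))
          rcases deg1_head_or_getLast (p.isChain_adj_support) hpath.support_nodup hw hwD.1
            with h | h
          · have hwℓ : ℓ = w := Option.some_inj.mp ((walk_head? p).symm.trans h)
            exact hℓT (hwℓ ▸ hwT)
          · exact hwt (Option.some_inj.mp ((walk_getLast? p).symm.trans h)).symm
        have hS' : S.erase ℓ ⊆ U.erase ℓ := fun x hx => by
          rw [Finset.mem_erase] at hx ⊢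
          exact ⟨hx.1, hS hx.2⟩
        have hT' : T.erase t ⊆ U.erase ℓ := fun x hx => by
          rw [Finset.mem_erase] at hx
          exact Finset.mem_erase.mpr ⟨fun h => hℓT (h ▸ hx.2), hT hx.2⟩
        have hcard' : (S.erase ℓ).card = (T.erase t).card := by
          rw [Finset.card_erase_of_mem hℓS, Finset.card_erase_of_mem htT, hcard]
        obtain ⟨n', hn', Xs, M, hmv, h0, hlast, hbal, hconf, hint⟩ :=
          ih (U.erase ℓ) _ _ hU' hS' hT' hcard' hconn'
        have hℓX : ∀ i ≤ n', ℓ ∉ Xs i := by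
          intro i hi hmem
          rcases Finset.mem_union.mp (hconf i hi hmem) with h | h
          · exact (Finset.mem_erase.mp h).1 rfl
          · exact hℓT (Finset.mem_of_mem_erase h)
        have hℓM : ∀ i < n', ℓ ∉ M i := fun i hi hmem =>
          (Finset.mem_erase.mp ((hmv i hi).2.2.2.2.2 ℓ hmem)).1 rfl
        have hlift := moveOn_mono (Finset.erase_subset ℓ U) (moveOn_lift hmv hℓX hℓM)
        set Xs' : ℕ → Finset V := fun i => if i ≤ n' then insert ℓ (Xs i) else T
          with hXs'def
        set M' : ℕ → List V := fun i => if i < n' then M i else p.support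
          with hM'def
        have hEle : ∀ m, m ≤ n' → Xs' m = insert ℓ (Xs m) := fun m hm => by
          simp [hXs'def, hm]
        have hEgt : ∀ m, n' < m → Xs' m = T := fun m hm => by
          simp [hXs'def, Nat.not_le.mpr hm]
        have hMlt : ∀ m, m < n' → M' m = M m := fun m hm => by simp [hM'def, hm]
        have hMge : M' n' = p.support := by simp [hM'def]
        have hplen : p.length ≠ 0 := fun h => htℓ (Walk.eq_of_length_eq_zero h).symm
        refine ⟨n' + 1, ?_, Xs', M', ?_, ?_, hEgt (n'+1) (by omega), ?_, ?_, ?_⟩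
        · have := Finset.card_erase_of_mem hℓS
          have hS1 : 1 ≤ S.card := Finset.card_pos.mpr ⟨ℓ, hℓS⟩
          omega
        · -- MoveOn
          intro i hi
          rcases Nat.lt_or_ge i n' with hin | hin
          · rw [hMlt i hin, hEle i (le_of_lt hin), hEle (i+1) hin]
            exact hlift i hin
          · have hieq : i = n' := by omega
            subst hieq
            rw [hMge, hEle i le_rfl, hEgt (i+1) (by omega), hlast]
            refine ⟨p.isChain_adj_support, hpath.support_nodup, ?_,
              ⟨ℓ, t, fun h => htℓ h.symm, walk_head? p, walk_getLast? p, ?_⟩, ?_, hpU⟩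
            · rw [Walk.length_support]; omega
            · rw [symmDiff_comm, symmDiff_move htT hℓT, Finset.pair_comm]
            · intro w hw hmem
              rw [Finset.mem_inter] at hmem
              have hwt : w = t := hsupT w hw hmem.2
              subst hwt
              rcases Finset.mem_insert.mp hmem.1 with h | h
              · exact htℓ h
              · exact (Finset.mem_erase.mp h).1 rfl
        · rw [hEle 0 (Nat.zero_le _), h0, Finset.insert_erase hℓS]
        · -- balanced
          intro i hi
          rcases Nat.lt_or_ge i n' with hin | hin
          · rw [hEle i (le_of_lt hin), hEle (i+1) hin,
              insert_sdiff_insert' (hℓX i (le_of_lt hin)), insert_sdiff_insert' (hℓX (i+1) hin)]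
            exact hbal i hin
          · have hieq : i = n' := by omega
            subst hieq
            rw [hEle i le_rfl, hEgt (i+1) (by omega), hlast,
              sdiff_move2 htT hℓT, sdiff_move1 htT hℓT]
            simp
        · -- configs ⊆ S ∪ T
          intro i hi x hx
          rcases le_or_gt i n' with hin | hin
          · rw [hEle i hin] at hx
            rcases Finset.mem_insert.mp hx with rfl | hx
            · exact Finset.mem_union_left _ hℓS
            · rcases Finset.mem_union.mp (hconf i hin hx) with h | h
              · exact Finset.mem_union_left _ (Finset.mem_of_mem_erase h)
              · exact Finset.mem_union_right _ (Finset.mem_of_mem_erase h)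
          · rw [hEgt i hin] at hx
            exact Finset.mem_union_right _ hx
        · -- interval
          intro v hv i j l hij hjl hln h1 h2
          rcases le_or_gt j n' with hjn | hjn
          · rw [hEle j hjn]
            by_cases hvℓ : v = ℓ
            · subst hvℓ; exact Finset.mem_insert_self _ _
            have hin : i ≤ n' := le_trans hij hjn
            rw [hEle i hin] at h1
            have hv1 : v ∈ Xs i := by
              rcases Finset.mem_insert.mp h1 with h | h
              · exact absurd h hvℓ
              · exact h
            by_cases hvt : v = t
            · subst hvt
              exfalso
              rcases Finset.mem_union.mp (hconf i hin hv1) with h | h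
              · exact htNS ⟨hv, Finset.mem_of_mem_erase h⟩
              · exact (Finset.mem_erase.mp h).1 rfl
            · rcases le_or_gt l n' with hl | hl
              · rw [hEle l hl] at h2
                have hv2 : v ∈ Xs l := by
                  rcases Finset.mem_insert.mp h2 with h | h
                  · exact absurd h hvℓ
                  · exact h
                exact Finset.mem_insert_of_mem (hint v hv i j l hij hjl hl hv1 hv2)
              · rw [hEgt l hl] at h2
                have hv2 : v ∈ Xs n' := by
                  rw [hlast]
                  exact Finset.mem_erase.mpr ⟨hvt, h2⟩
                exact Finset.mem_insert_of_mem
                  (hint v hv i j n' hij hjn le_rfl hv1 hv2)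
          · have hjeq : j = n' + 1 := by omega
            have hleq : l = n' + 1 := by omega
            rw [hEgt j hjn]
            rw [hleq, hEgt (n'+1) (by omega)] at h2
            exact h2
      · -- case c : ℓ ∈ T \\ S
        classical
        have hs₀Q : s₀ ∈ S.filter (fun v => ¬(Deg1 G v ∧ v ∈ T)) :=
          Finset.mem_filter.mpr ⟨hs₀S, fun h => hs₀T h.2⟩
        obtain ⟨s, hsQ, p, hpath, hpU, hpQ⟩ :=
          exists_min_path_to G hconn hℓU hs₀Q (hS hs₀S)
        have hsS : s ∈ S := (Finset.mem_filter.mp hsQ).1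
        have hsNT : ¬(Deg1 G s ∧ s ∈ T) := (Finset.mem_filter.mp hsQ).2
        have hsℓ : s ≠ ℓ := fun h => hℓS (h ▸ hsS)
        have hsupS : ∀ w ∈ p.support, w ∈ S → w = s := by
          intro w hw hwS
          by_contra hws
          have hwD : Deg1 G w ∧ w ∈ T := by
            by_contra hD
            exact hws (hpQ w hw (Finset.mem_filter.mpr ⟨hwS, hD⟩))
          rcases deg1_head_or_getLast (p.isChain_adj_support) hpath.support_nodup hw hwD.1
            with h | h
          · have hwℓ : ℓ = w := Option.some_inj.mp ((walk_head? p).symm.trans h)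
            exact hℓS (hwℓ ▸ hwS)
          · exact hws (Option.some_inj.mp ((walk_getLast? p).symm.trans h)).symm
        have hS' : S.erase s ⊆ U.erase ℓ := fun x hx => by
          rw [Finset.mem_erase] at hx
          exact Finset.mem_erase.mpr ⟨fun h => hℓS (h ▸ hx.2), hS hx.2⟩
        have hT' : T.erase ℓ ⊆ U.erase ℓ := fun x hx => by
          rw [Finset.mem_erase] at hx ⊢
          exact ⟨hx.1, hT hx.2⟩
        have hcard' : (S.erase s).card = (T.erase ℓ).card := by
          rw [Finset.card_erase_of_mem hsS, Finset.card_erase_of_mem hℓT, hcard]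
        obtain ⟨n', hn', Xs, M, hmv, h0, hlast, hbal, hconf, hint⟩ :=
          ih (U.erase ℓ) _ _ hU' hS' hT' hcard' hconn'
        have hℓX : ∀ i ≤ n', ℓ ∉ Xs i := by
          intro i hi hmem
          rcases Finset.mem_union.mp (hconf i hi hmem) with h | h
          · exact hℓS (Finset.mem_of_mem_erase h)
          · exact (Finset.mem_erase.mp h).1 rfl
        have hℓM : ∀ i < n', ℓ ∉ M i := fun i hi hmem =>
          (Finset.mem_erase.mp ((hmv i hi).2.2.2.2.2 ℓ hmem)).1 rfl
        have hlift := moveOn_mono (Finset.erase_subset ℓ U) (moveOn_lift hmv hℓX hℓM)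
        set Xs' : ℕ → Finset V := fun i => if i = 0 then S else insert ℓ (Xs (i-1))
          with hXs'def
        set M' : ℕ → List V := fun i => if i = 0 then p.support.reverse else M (i-1)
          with hM'def
        have hE0 : Xs' 0 = S := by simp [hXs'def]
        have hEs : ∀ m : ℕ, Xs' (m+1) = insert ℓ (Xs m) := fun m => by simp [hXs'def]
        have hM0 : M' 0 = p.support.reverse := by simp [hM'def]
        have hMs : ∀ m : ℕ, M' (m+1) = M m := fun m => by simp [hM'def]
        have hplen : p.length ≠ 0 := fun h => hsℓ (Walk.eq_of_length_eq_zero h).symm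
        refine ⟨n' + 1, ?_, Xs', M', ?_, hE0, ?_, ?_, ?_, ?_⟩
        · have := Finset.card_erase_of_mem hsS
          have hS1 : 1 ≤ S.card := Finset.card_pos.mpr ⟨s, hsS⟩
          omega
        · -- MoveOn
          intro i hi
          rcases i with _ | j
          · rw [hM0, hE0, zero_add, hEs 0, h0]
            refine ⟨?_, ?_, ?_, ⟨s, ℓ, hsℓ, ?_, ?_, ?_⟩, ?_, ?_⟩
            · refine List.isChain_reverse.mpr ?_
              exact List.IsChain.imp (fun a b h => h.symm) p.isChain_adj_support
            · exact List.nodup_reverse.mpr hpath.support_nodup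
            · rw [List.length_reverse, Walk.length_support]; omega
            · rw [List.head?_reverse]; exact walk_getLast? p
            · rw [List.getLast?_reverse]; exact walk_head? p
            · exact symmDiff_move hsS hℓS
            · intro w hw hmem
              rw [List.mem_reverse] at hw
              rw [Finset.mem_inter] at hmem
              have hws : w = s := hsupS w hw hmem.1
              subst hws
              rcases Finset.mem_insert.mp hmem.2 with h | h
              · exact hsℓ h
              · exact (Finset.mem_erase.mp h).1 rfl
            · intro w hw
              rw [List.mem_reverse] at hw
              exact hpU w hw
          · have hj : j < n' := by omega
            rw [hMs j, hEs j, show j + 1 + 1 = (j+1) + 1 from rfl, hEs (j+1)]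
            exact hlift j hj
        · rw [show n' + 1 = n' + 1 from rfl, hEs n', hlast, Finset.insert_erase hℓT]
        · -- balanced
          intro i hi
          rcases i with _ | j
          · rw [hE0, zero_add, hEs 0, h0, sdiff_move1 hsS hℓS, sdiff_move2 hsS hℓS]
            simp
          · have hj : j < n' := by omega
            rw [hEs j, show j + 1 + 1 = (j+1) + 1 from rfl, hEs (j+1),
              insert_sdiff_insert' (hℓX j (le_of_lt hj)), insert_sdiff_insert' (hℓX (j+1) hj)]
            exact hbal j hj
        · -- configs ⊆ S ∪ T
          intro i hi x hx
          rcases i with _ | j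
          · rw [hE0] at hx; exact Finset.mem_union_left _ hx
          · rw [hEs j] at hx
            rcases Finset.mem_insert.mp hx with rfl | hx
            · exact Finset.mem_union_right _ hℓT
            · rcases Finset.mem_union.mp (hconf j (by omega) hx) with h | h
              · exact Finset.mem_union_left _ (Finset.mem_of_mem_erase h)
              · exact Finset.mem_union_right _ (Finset.mem_of_mem_erase h)
        · -- interval
          intro v hv i j l hij hjl hln h1 h2
          by_cases hj0 : j = 0
          · subst hj0
            have hi0 : i = 0 := by omega
            subst hi0
            exact h1
          · have hEj : Xs' j = insert ℓ (Xs (j-1)) := by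
              rw [hXs'def]; simp [hj0]
            rw [hEj]
            by_cases hvℓ : v = ℓ
            · subst hvℓ; exact Finset.mem_insert_self _ _
            have hl0 : l ≠ 0 := by omega
            have hEl : Xs' l = insert ℓ (Xs (l-1)) := by
              rw [hXs'def]; simp [hl0]
            rw [hEl] at h2
            have hv2 : v ∈ Xs (l-1) := by
              rcases Finset.mem_insert.mp h2 with h | h
              · exact absurd h hvℓ
              · exact h
            by_cases hvs : v = s
            · subst hvs
              exfalso
              have hD1 : Deg1 G v := hv
              rcases Finset.mem_union.mp (hconf (l-1) (by omega) hv2) with h | h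
              · exact (Finset.mem_erase.mp h).1 rfl
              · exact hsNT ⟨hD1, Finset.mem_of_mem_erase h⟩
            · have hv1 : v ∈ Xs (i-1) := by
                by_cases hi0 : i = 0
                · subst hi0
                  rw [hE0] at h1
                  have : v ∈ S.erase s := Finset.mem_erase.mpr ⟨hvs, h1⟩
                  rw [← h0] at this
                  simpa using this
                · have hEi : Xs' i = insert ℓ (Xs (i-1)) := by
                    rw [hXs'def]; simp [hi0]
                  rw [hEi] at h1
                  rcases Finset.mem_insert.mp h1 with h | h
                  · exact absurd h hvℓ
                  · exact h
              exact Finset.mem_insert_of_mem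
                (hint v hv (i-1) (j-1) (l-1) (by omega) (by omega) (by omega) hv1 hv2)
      · -- case a : ℓ ∉ S ∪ T
        have hS' : S ⊆ U.erase ℓ := fun x hx =>
          Finset.mem_erase.mpr ⟨fun h => hℓS (h ▸ hx), hS hx⟩
        have hT' : T ⊆ U.erase ℓ := fun x hx =>
          Finset.mem_erase.mpr ⟨fun h => hℓT (h ▸ hx), hT hx⟩
        obtain ⟨n, hn, Xs, M, hmv, h0, hlast, hbal, hconf, hint⟩ :=
          ih (U.erase ℓ) S T hU' hS' hT' hcard hconn'
        exact ⟨n, hn, Xs, M, moveOn_mono (Finset.erase_subset ℓ U) hmv,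
          h0, hlast, hbal, hconf, hint⟩

/-- For any two distinct vertex sets `X`, `Y` of size `k` in a connected graph
`H` and any marginal set `A`, there is a balanced `X`–`Y` movement of length at
most `k` on `H` such that every vertex of `A` is strongly singular. -/
theorem stmt_10 {V : Type} [Fintype V] [DecidableEq V] (H : SimpleGraph V)
    (hconn : H.Connected) (k : ℕ) (X Y : Finset V) (hne : X ≠ Y)
    (hX : X.card = k) (hY : Y.card = k) (A : Set V) (hA : IsMarginal H A) :
    ∃ n ≤ k, ∃ (Xs : ℕ → Finset V) (M : ℕ → List V),
      IsMovement H n Xs M ∧ Xs 0 = X ∧ Xs n = Y ∧ BalancedMovement n Xs ∧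
      ∀ a ∈ A, StronglySingular n Xs M a := by
  classical
  choose bf hbf1 hbf2 using hA.2
  set b : V → V := fun a => if h : a ∈ A then bf a h else a with hbdef
  have hb1 : ∀ a, a ∈ A → b a ∉ A := by
    intro a ha
    rw [hbdef]; simp only [dif_pos ha]; exact hbf1 a ha
  have hb2 : ∀ a, a ∈ A → H.Adj a (b a) := by
    intro a ha
    rw [hbdef]; simp only [dif_pos ha]; exact hbf2 a ha
  set G : SimpleGraph V :=
    { Adj := fun x y => H.Adj x y ∧
        ((x ∉ A ∧ y ∉ A) ∨ (x ∈ A ∧ y = b x) ∨ (y ∈ A ∧ x = b y)),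
      symm := by
        constructor
        intro x y h
        refine ⟨h.1.symm, ?_⟩
        rcases h.2 with ⟨h1, h2⟩ | ⟨h1, h2⟩ | ⟨h1, h2⟩
        · exact Or.inl ⟨h2, h1⟩
        · exact Or.inr (Or.inr ⟨h1, h2⟩)
        · exact Or.inr (Or.inl ⟨h1, h2⟩),
      loopless := ⟨fun x h => H.loopless.irrefl x h.1⟩ } with hGdef
  have hGadj : ∀ x y : V, G.Adj x y ↔ (H.Adj x y ∧
      ((x ∉ A ∧ y ∉ A) ∨ (x ∈ A ∧ y = b x) ∨ (y ∈ A ∧ x = b y))) := fun x y => Iff.rfl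
  have hGH : ∀ x y : V, G.Adj x y → H.Adj x y := fun x y h => h.1
  have hdeg : ∀ a ∈ A, Deg1 G a := by
    intro a ha y z hy hz
    have ey : y = b a := by
      rcases hy.2 with ⟨h1, _⟩ | ⟨_, h2⟩ | ⟨h1, h2⟩
      · exact absurd ha h1
      · exact h2
      · exact absurd (h2 ▸ ha) (hb1 y h1)
    have ez : z = b a := by
      rcases hz.2 with ⟨h1, _⟩ | ⟨_, h2⟩ | ⟨h1, h2⟩
      · exact absurd ha h1
      · exact h2
      · exact absurd (h2 ▸ ha) (hb1 z h1)
    rw [ey, ez]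
  set U : Finset V := Finset.univ.filter (fun v => v ∈ A → (v ∈ X ∨ v ∈ Y)) with hUdef
  have hmemU : ∀ v : V, v ∈ U ↔ (v ∈ A → (v ∈ X ∨ v ∈ Y)) := by
    intro v; rw [hUdef]; simp
  have hXU : X ⊆ U := fun x hx => (hmemU x).mpr fun _ => Or.inl hx
  have hYU : Y ⊆ U := fun y hy => (hmemU y).mpr fun _ => Or.inr hy
  have hcore : ∀ x' y' : V, x' ∉ A → y' ∉ A →
      ∃ r : G.Walk x' y', ∀ w ∈ r.support, w ∉ A := by
    intro x' y' hx hy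
    obtain ⟨w⟩ := hA.1.preconnected ⟨x', hx⟩ ⟨y', hy⟩
    have hmap : ∀ {u v : ↥(Aᶜ)}, (H.induce Aᶜ).Adj u v → G.Adj u.val v.val := by
      intro u v huv
      exact ⟨huv, Or.inl ⟨u.2, v.2⟩⟩
    refine ⟨w.map ⟨Subtype.val, hmap⟩, ?_⟩
    intro wv hwv
    rw [Walk.support_map] at hwv
    obtain ⟨u, _, rfl⟩ := List.mem_map.mp hwv
    exact u.2
  have hstep : ∀ x ∈ U, ∃ (x' : V) (q : G.Walk x x'), x' ∉ A ∧ ∀ w ∈ q.support, w ∈ U := by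
    intro x hx
    by_cases hxA : x ∈ A
    · have hadj : G.Adj x (b x) := ⟨hb2 x hxA, Or.inr (Or.inl ⟨hxA, rfl⟩)⟩
      refine ⟨b x, Walk.cons hadj Walk.nil, hb1 x hxA, ?_⟩
      intro w hw
      rw [Walk.support_cons, Walk.support_nil] at hw
      rcases List.mem_cons.mp hw with h | h
      · exact h ▸ hx
      · rw [List.mem_singleton] at h
        exact h ▸ (hmemU (b x)).mpr fun hc => absurd hc (hb1 x hxA)
    · exact ⟨x, Walk.nil, hxA, by
        intro w hw
        rw [Walk.support_nil, List.mem_singleton] at hw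
        exact hw ▸ hx⟩
  have hconnU : ConnOn G U := by
    intro x hxU y hyU
    obtain ⟨x', qx, hx'A, hqxU⟩ := hstep x hxU
    obtain ⟨y', qy, hy'A, hqyU⟩ := hstep y hyU
    obtain ⟨r, hrA⟩ := hcore x' y' hx'A hy'A
    set ttl := qx.append (r.append qy.reverse) with httl
    refine ⟨ttl.bypass, ttl.bypass_isPath, ?_⟩
    intro w hw
    have hmem := ttl.support_bypass_subset hw
    rw [httl, Walk.mem_support_append_iff, Walk.mem_support_append_iff] at hmem
    rcases hmem with h | h | h
    · exact hqxU w h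
    · exact (hmemU w).mpr fun hc => absurd hc (hrA w h)
    · rw [Walk.support_reverse, List.mem_reverse] at h
      exact hqyU w h
  obtain ⟨n, hn, Xs, M, hmv, h0, hlast, hbal, hconf, hint⟩ :=
    mainLemma G U.card U X Y le_rfl hXU hYU (hX.trans hY.symm) hconnU
  refine ⟨n, hX ▸ hn, Xs, M, ?_, h0, hlast, hbal, ?_⟩
  · intro i hi
    obtain ⟨c, nd, len, ex, av, _⟩ := hmv i hi
    exact ⟨List.IsChain.imp (fun a c h => hGH a c h) c, nd, len, ex, av⟩
  · intro a ha
    refine ⟨?_, hint a (hdeg a ha), ?_⟩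
    · intro i hi hm
      obtain ⟨c, nd, _, _, _, _⟩ := hmv i hi
      exact deg1_head_or_getLast c nd hm (hdeg a ha)
    · by_cases haX : a ∈ X
      · exact Or.inr (Or.inl (h0 ▸ haX))
      by_cases haY : a ∈ Y
      · exact Or.inr (Or.inr (hlast ▸ haY))
      · left
        intro i hi hmem
        rcases Finset.mem_union.mp (hconf i hi hmem) with h | h
        · exact haX h
        · exact haY h
end Aux
end

section
/- Let H be a connected graph, X,Y ⊆ V(H), L an (X,Y)-pairing, and (X,M) an L-movement of length n on H. If x ∈ X ∪ Y is strongly singular with respect to (X,M), then ((X₀ △ {x},…,Xₙ △ {x}), M) is an (L △ x)-movement of length n on H, where L △ x is obtained from L by replacing the vertex (x,0) with (x,∞) or vice versa. -/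
/-- One edge of the trace (multi)graph `R` of a movement: either a token stays
on a vertex `x ∈ X i ∩ X (i+1)` (an edge from `(x,i)` to `(x,i+1)`), or the two
end vertices `u`, `v` of the move `M i` are joined, each at the unique index
(`i` or `i+1`) where it belongs to a configuration. -/
def TraceStep {V : Type} [DecidableEq V] (n : ℕ) (X : ℕ → Finset V)
    (M : ℕ → List V) (p q : V × ℕ) : Prop :=
  (∃ i < n, p.1 = q.1 ∧ p.2 = i ∧ q.2 = i + 1 ∧ p.1 ∈ X i ∧ p.1 ∈ X (i + 1)) ∨
  (∃ i < n, ∃ u v : V, (M i).head? = some u ∧ (M i).getLast? = some v ∧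
    ((p.1 = u ∧ q.1 = v) ∨ (p.1 = v ∧ q.1 = u)) ∧
    p.2 = (if p.1 ∈ X i then i else i + 1) ∧
    q.2 = (if q.1 ∈ X i then i else i + 1))

/-- `(a,s)` and `(b,t)` (with `s, t : Bool`; `false` denotes the first
configuration `X 0` and `true` the last configuration `X n`) lie in the same
component of the trace graph of the movement, i.e. they are joined by the
induced pairing of the movement. -/
def InducedPaired {V : Type} [DecidableEq V] (n : ℕ) (X : ℕ → Finset V)
    (M : ℕ → List V) (a : V) (s : Bool) (b : V) (t : Bool) : Prop :=
  Relation.ReflTransGen (fun p q => TraceStep n X M p q ∨ TraceStep n X M q p)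
    (a, if s then n else 0) (b, if t then n else 0)

namespace Stmt12

variable {V : Type} [DecidableEq V]

def Conn (n : ℕ) (X : ℕ → Finset V) (M : ℕ → List V) : V × ℕ → V × ℕ → Prop :=
  Relation.ReflTransGen (fun p q => TraceStep n X M p q ∨ TraceStep n X M q p)

theorem conn_symm {n : ℕ} {X : ℕ → Finset V} {M : ℕ → List V} {p q : V × ℕ}
    (h : Conn n X M p q) : Conn n X M q p :=
  (@Relation.ReflTransGen.stdSymm _ _ ⟨fun _ _ hh => hh.symm⟩).symm _ _ h

theorem stay_step {n : ℕ} {X : ℕ → Finset V} {M : ℕ → List V} {x : V} {i : ℕ}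
    (hi : i < n) (h1 : x ∈ X i) (h2 : x ∈ X (i + 1)) :
    TraceStep n X M (x, i) (x, i + 1) :=
  Or.inl ⟨i, hi, rfl, rfl, rfl, h1, h2⟩

theorem mem_flip {A : Finset V} {w x : V} (h : w ≠ x) : w ∈ symmDiff A {x} ↔ w ∈ A := by
  simp [Finset.mem_symmDiff, h]

theorem mem_flip_x {A : Finset V} {x : V} : x ∈ symmDiff A {x} ↔ x ∉ A := by
  simp [Finset.mem_symmDiff]

theorem chain_conn (n : ℕ) (X : ℕ → Finset V) (M : ℕ → List V) (x : V)
    (conv : ∀ i j l : ℕ, i ≤ j → j ≤ l → l ≤ n → x ∈ X i → x ∈ X l → x ∈ X j)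
    (h0n : ∀ j ≤ n, x ∉ X 0 → x ∈ X j → x ∈ X n) :
    ∀ j ≤ n, x ∈ X j → Conn n X M (x, if x ∈ X 0 then 0 else n) (x, j) := by
  intro j hj hxj
  by_cases h0 : x ∈ X 0
  · simp only [if_pos h0]
    suffices hh : ∀ k, k ≤ j → Conn n X M (x, 0) (x, k) from hh j le_rfl
    intro k
    induction k with
    | zero => intro _; exact Relation.ReflTransGen.refl
    | succ k ih =>
      intro hk
      exact (ih (Nat.le_of_succ_le hk)).tail
        (Or.inl (stay_step (lt_of_lt_of_le (Nat.lt_of_succ_le hk) hj)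
          (conv 0 k j (Nat.zero_le _) (Nat.le_of_succ_le hk) hj h0 hxj)
          (conv 0 (k + 1) j (Nat.zero_le _) hk hj h0 hxj)))
  · have hxn : x ∈ X n := h0n j hj h0 hxj
    simp only [if_neg h0]
    refine conn_symm ?_
    suffices hh : ∀ k, k ≤ n - j → Conn n X M (x, j) (x, j + k) by
      have := hh (n - j) le_rfl
      rwa [Nat.add_sub_cancel' hj] at this
    intro k
    induction k with
    | zero => intro _; exact Relation.ReflTransGen.refl
    | succ k ih =>
      intro hk
      have hk' : j + k < n := by omega
      refine (ih (Nat.le_of_succ_le hk)).tail (Or.inl (stay_step hk' ?_ ?_))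
      · exact conv j (j + k) n (Nat.le_add_right _ _) (le_of_lt hk') le_rfl hxj hxn
      · exact conv j (j + k + 1) n (by omega) (by omega) le_rfl hxj hxn

def phi (n : ℕ) (X : ℕ → Finset V) (x : V) (p : V × ℕ) : V × ℕ :=
  if p.1 = x then (x, if x ∈ X 0 then 0 else n) else p

theorem move_x (n : ℕ) (X : ℕ → Finset V) (M : ℕ → List V) (x : V)
    (hends : ∀ i < n, ∃ u v : V, u ≠ v ∧ (M i).head? = some u ∧ (M i).getLast? = some v ∧
      symmDiff (X i) (X (i + 1)) = {u, v})
    (conv : ∀ i j l : ℕ, i ≤ j → j ≤ l → l ≤ n → x ∈ X i → x ∈ X l → x ∈ X j)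
    (h0n : ∀ j ≤ n, x ∉ X 0 → x ∈ X j → x ∈ X n)
    (i : ℕ) (hi : i < n) (u v w : V)
    (hu : (M i).head? = some u) (hv : (M i).getLast? = some v)
    (hor : (x = u ∧ w = v) ∨ (x = v ∧ w = u)) :
    Conn n X M (x, if x ∈ X 0 then 0 else n) (w, if w ∈ X i then i else i + 1) := by
  obtain ⟨u₀, v₀, hne₀, hu₀, hv₀, hsd⟩ := hends i hi
  have huu : u₀ = u := Option.some.inj (hu₀.symm.trans hu)
  have hvv : v₀ = v := Option.some.inj (hv₀.symm.trans hv)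
  rw [huu, hvv] at hsd
  have hxsd : x ∈ symmDiff (X i) (X (i + 1)) := by
    rw [hsd]; rcases hor with ⟨h1, _⟩ | ⟨h1, _⟩ <;> simp [h1]
  rw [Finset.mem_symmDiff] at hxsd
  have hxjx : x ∈ X (if x ∈ X i then i else i + 1) := by
    by_cases hxi : x ∈ X i <;> simp only [if_pos, if_neg, hxi] <;> tauto
  have hc := chain_conn n X M x conv h0n (if x ∈ X i then i else i + 1)
    (by split <;> omega) hxjx
  exact hc.tail (Or.inl (Or.inr ⟨i, hi, u, v, hu, hv, hor, rfl, rfl⟩))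

theorem step_transfer (n : ℕ) (X : ℕ → Finset V) (M : ℕ → List V) (x : V)
    (hends : ∀ i < n, ∃ u v : V, u ≠ v ∧ (M i).head? = some u ∧ (M i).getLast? = some v ∧
      symmDiff (X i) (X (i + 1)) = {u, v})
    (conv : ∀ i j l : ℕ, i ≤ j → j ≤ l → l ≤ n → x ∈ X i → x ∈ X l → x ∈ X j)
    (h0n : ∀ j ≤ n, x ∉ X 0 → x ∈ X j → x ∈ X n)
    (p q : V × ℕ) (hstep : TraceStep n (fun i => symmDiff (X i) {x}) M p q) :
    Conn n X M (phi n X x p) (phi n X x q) := by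
  obtain ⟨i, hi, h1, hp2, hq2, hpi, hpi1⟩ | ⟨i, hi, u, v, hu, hv, hor, hp2, hq2⟩ := hstep
  · by_cases hpx : p.1 = x
    · have : phi n X x p = phi n X x q := by
        simp only [phi, if_pos hpx, if_pos (h1 ▸ hpx)]
      rw [this]
      exact Relation.ReflTransGen.refl
    · have hq1x : q.1 ≠ x := h1 ▸ hpx
      have hpX : p.1 ∈ X i := (mem_flip hpx).mp hpi
      have hpX1 : p.1 ∈ X (i + 1) := (mem_flip hpx).mp hpi1
      rw [show phi n X x p = p from if_neg hpx, show phi n X x q = q from if_neg hq1x]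
      exact Relation.ReflTransGen.single (Or.inl (Or.inl ⟨i, hi, h1, hp2, hq2, hpX, hpX1⟩))
  · obtain ⟨u₀, v₀, hne₀, hu₀, hv₀, hsd⟩ := hends i hi
    have huu : u₀ = u := Option.some.inj (hu₀.symm.trans hu)
    have hvv : v₀ = v := Option.some.inj (hv₀.symm.trans hv)
    rw [huu, hvv] at hne₀
    by_cases hpx : p.1 = x
    · have hq1x : q.1 ≠ x := by
        rcases hor with ⟨h1, h2⟩ | ⟨h1, h2⟩
        · rw [h2]; intro hh; exact hne₀ ((h1.symm.trans hpx).trans hh.symm)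
        · rw [h2]; intro hh; exact hne₀ (hh.trans (hpx.symm.trans h1))
      have hq2' : q.2 = if q.1 ∈ X i then i else i + 1 := by
        rw [hq2]; congr 1; exact propext (mem_flip hq1x)
      have hq : q = (q.1, if q.1 ∈ X i then i else i + 1) := Prod.ext rfl hq2'
      rw [show phi n X x p = (x, if x ∈ X 0 then 0 else n) from if_pos hpx,
        show phi n X x q = q from if_neg hq1x, hq]
      refine move_x n X M x hends conv h0n i hi u v q.1 hu hv ?_
      rcases hor with ⟨h1, h2⟩ | ⟨h1, h2⟩
      · exact Or.inl ⟨hpx.symm.trans h1, h2⟩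
      · exact Or.inr ⟨hpx.symm.trans h1, h2⟩
    · by_cases hqx : q.1 = x
      · have hp2' : p.2 = if p.1 ∈ X i then i else i + 1 := by
          rw [hp2]; congr 1; exact propext (mem_flip hpx)
        have hp : p = (p.1, if p.1 ∈ X i then i else i + 1) := Prod.ext rfl hp2'
        rw [show phi n X x q = (x, if x ∈ X 0 then 0 else n) from if_pos hqx,
          show phi n X x p = p from if_neg hpx, hp]
        refine conn_symm (move_x n X M x hends conv h0n i hi u v p.1 hu hv ?_)
        rcases hor with ⟨h1, h2⟩ | ⟨h1, h2⟩
        · exact Or.inr ⟨hqx.symm.trans h2, h1⟩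
        · exact Or.inl ⟨hqx.symm.trans h2, h1⟩
      · have hp2' : p.2 = if p.1 ∈ X i then i else i + 1 := by
          rw [hp2]; congr 1; exact propext (mem_flip hpx)
        have hq2' : q.2 = if q.1 ∈ X i then i else i + 1 := by
          rw [hq2]; congr 1; exact propext (mem_flip hqx)
        rw [show phi n X x p = p from if_neg hpx, show phi n X x q = q from if_neg hqx]
        exact Relation.ReflTransGen.single
          (Or.inl (Or.inr ⟨i, hi, u, v, hu, hv, hor, hp2', hq2'⟩))

theorem conn_transfer (n : ℕ) (X : ℕ → Finset V) (M : ℕ → List V) (x : V)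
    (hends : ∀ i < n, ∃ u v : V, u ≠ v ∧ (M i).head? = some u ∧ (M i).getLast? = some v ∧
      symmDiff (X i) (X (i + 1)) = {u, v})
    (conv : ∀ i j l : ℕ, i ≤ j → j ≤ l → l ≤ n → x ∈ X i → x ∈ X l → x ∈ X j)
    (h0n : ∀ j ≤ n, x ∉ X 0 → x ∈ X j → x ∈ X n)
    {p q : V × ℕ} (h : Conn n (fun i => symmDiff (X i) {x}) M p q) :
    Conn n X M (phi n X x p) (phi n X x q) := by
  induction h with
  | refl => exact Relation.ReflTransGen.refl
  | tail _ hstep ih =>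
    rcases hstep with hs | hs
    · exact ih.trans (step_transfer n X M x hends conv h0n _ _ hs)
    · exact ih.trans (conn_symm (step_transfer n X M x hends conv h0n _ _ hs))

end Stmt12

/-- If `x ∈ X₀ ∪ Xₙ` is strongly singular with respect to an `L`-movement
`(X, M)` of length `n`, then `(X ∆ x, M)` is an `(L ∆ x)`-movement of length
`n`: replacing each configuration `X i` by `X i ∆ {x}` again yields a movement,
and its induced pairing is obtained from that of `(X, M)` by exchanging the
roles of `(x, 0)` and `(x, ∞)`. -/
theorem stmt_12 {V : Type} [DecidableEq V] (H : SimpleGraph V) (n : ℕ)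
    (X : ℕ → Finset V) (M : ℕ → List V) (h : IsMovement H n X M)
    (x : V) (hx : x ∈ X 0 ∪ X n) (hsing : StronglySingular n X M x) :
    IsMovement H n (fun i => symmDiff (X i) {x}) M ∧
    ∀ (a b : V) (s t : Bool),
      (if s then a ∈ symmDiff (X n) {x} else a ∈ symmDiff (X 0) {x}) →
      (if t then b ∈ symmDiff (X n) {x} else b ∈ symmDiff (X 0) {x}) →
      (InducedPaired n (fun i => symmDiff (X i) {x}) M a s b t ↔
        InducedPaired n X M a (if a = x then !s else s) b (if b = x then !t else t)) := by
  have hx0n : x ∈ X 0 ∨ x ∈ X n := by simpa [Finset.mem_union] using hx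
  obtain ⟨hinner, conv, -⟩ := hsing
  have part1 : IsMovement H n (fun i => symmDiff (X i) {x}) M := by
    intro i hi
    obtain ⟨hc, hnd, hl, ⟨u, v, hne, hu, hv, hsd⟩, hdisj⟩ := h i hi
    refine ⟨hc, hnd, hl, ⟨u, v, hne, hu, hv, ?_⟩, ?_⟩
    · show symmDiff (symmDiff (X i) {x}) (symmDiff (X (i + 1)) {x}) = {u, v}
      rw [symmDiff_symmDiff_symmDiff_comm, symmDiff_self, symmDiff_bot]; exact hsd
    · intro w hw
      by_cases hwx : w = x
      · subst hwx
        have hh := hinner i hi hw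
        have hxuv : w = u ∨ w = v := by
          rcases hh with h' | h'
          · exact Or.inl (Option.some.inj (h'.symm.trans hu))
          · exact Or.inr (Option.some.inj (h'.symm.trans hv))
        have hxsd : w ∈ symmDiff (X i) (X (i + 1)) := by
          rw [hsd]; rcases hxuv with h' | h' <;> simp [h']
        rw [Finset.mem_symmDiff] at hxsd
        simp only [Finset.mem_inter, Stmt12.mem_flip_x, not_and, not_not]
        tauto
      · have hws := hdisj w hw
        simp only [Finset.mem_inter] at hws
        simp only [Finset.mem_inter, Stmt12.mem_flip hwx]
        exact hws
  refine ⟨part1, ?_⟩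
  set Y : ℕ → Finset V := fun i => symmDiff (X i) {x} with hY
  have hmemYx : ∀ i, x ∈ Y i ↔ x ∉ X i := fun i => Stmt12.mem_flip_x
  have h0n : ∀ j ≤ n, x ∉ X 0 → x ∈ X j → x ∈ X n := fun j _ h0 _ => hx0n.resolve_left h0
  have conv' : ∀ i j l : ℕ, i ≤ j → j ≤ l → l ≤ n → x ∈ Y i → x ∈ Y l → x ∈ Y j := by
    intro i j l hij hjl hln hi' hl'
    rw [hmemYx] at hi' hl' ⊢
    intro hxj
    rcases hx0n with h0 | hn
    · exact hi' (conv 0 i j (Nat.zero_le _) hij (le_trans hjl hln) h0 hxj)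
    · exact hl' (conv j l n hjl hln le_rfl hxj hn)
  have h0n' : ∀ j ≤ n, x ∉ Y 0 → x ∈ Y j → x ∈ Y n := by
    intro j hj h0' hj'
    rw [hmemYx] at hj' ⊢
    rw [hmemYx, not_not] at h0'
    intro hxn
    exact hj' (conv 0 j n (Nat.zero_le _) hj le_rfl h0' hxn)
  have hends : ∀ i < n, ∃ u v : V, u ≠ v ∧ (M i).head? = some u ∧ (M i).getLast? = some v ∧
      symmDiff (X i) (X (i + 1)) = {u, v} := fun i hi => (h i hi).2.2.2.1
  have hends' : ∀ i < n, ∃ u v : V, u ≠ v ∧ (M i).head? = some u ∧ (M i).getLast? = some v ∧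
      symmDiff (Y i) (Y (i + 1)) = {u, v} := fun i hi => (part1 i hi).2.2.2.1
  have hYY : (fun i => symmDiff (Y i) {x}) = X := by
    funext i
    rw [hY]
    exact symmDiff_symmDiff_cancel_right _ _
  intro a b s t ha hb
  have key : ∀ (c : V) (r : Bool), (if r then c ∈ Y n else c ∈ Y 0) →
      Stmt12.phi n X x (c, if r then n else 0)
        = (c, if (if c = x then !r else r) then (n : ℕ) else 0) ∧
      Stmt12.phi n Y x (c, if (if c = x then !r else r) then (n : ℕ) else 0)
        = (c, if r then n else 0) := by
    intro c r hc
    by_cases hcx : c = x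
    · subst hcx
      cases r with
      | false =>
        simp only [Bool.false_eq_true, if_false] at hc
        have hc0 : c ∉ X 0 := (hmemYx 0).mp hc
        constructor
        · simp [Stmt12.phi, hc0]
        · simp [Stmt12.phi, hc]
      | true =>
        simp only [if_true] at hc
        have hcn : c ∉ X n := (hmemYx n).mp hc
        have hc0 : c ∈ X 0 := hx0n.resolve_right hcn
        have hcY0 : c ∉ Y 0 := by rw [hmemYx, not_not]; exact hc0
        constructor
        · simp [Stmt12.phi, hc0]
        · simp [Stmt12.phi, hcY0]
    · constructor <;> simp [Stmt12.phi, hcx]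
  constructor
  · intro hcon
    have hcon' : Stmt12.Conn n Y M (a, if s then (n : ℕ) else 0)
        (b, if t then (n : ℕ) else 0) := hcon
    have hres := Stmt12.conn_transfer n X M x hends conv h0n hcon'
    rw [(key a s ha).1, (key b t hb).1] at hres
    exact hres
  · intro hcon
    have hcon' : Stmt12.Conn n (fun i => symmDiff (Y i) {x}) M
        (a, if (if a = x then !s else s) then (n : ℕ) else 0)
        (b, if (if b = x then !t else t) then (n : ℕ) else 0) := by
      rw [hYY]; exact hcon
    have hres := Stmt12.conn_transfer n Y M x hends' conv' h0n' hcon'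
    rw [(key a s ha).2, (key b t hb).2] at hres
    exact hres
end

section
/- Let H be a finite graph that is not 2-linked, let k ≥ 3, and let G be the join of H with an edgeless graph K on 2k−4 vertices. Then G is not k-linked. -/
/-- The join `H * K` of `H` with an edgeless graph `K` on `m` vertices:
disjoint union plus all edges between `V(H)` and `V(K)`. -/
def joinWithEdgeless {W : Type} (H : SimpleGraph W) (m : ℕ) :
    SimpleGraph (W ⊕ Fin m) where
  Adj x y :=
    match x, y with
    | Sum.inl u, Sum.inl v => H.Adj u v
    | Sum.inl _, Sum.inr _ => True
    | Sum.inr _, Sum.inl _ => True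
    | Sum.inr _, Sum.inr _ => False
  symm := by
    refine ⟨?_⟩
    rintro (u | i) (v | j) h
    · exact H.adj_symm h
    · trivial
    · trivial
    · exact h.elim
  loopless := by
    refine ⟨?_⟩
    rintro (u | i) h
    · exact H.irrefl h
    · exact h

lemma pull_walk {W : Type} {m : ℕ} (H : SimpleGraph W) :
    ∀ {x y : W ⊕ Fin m} (Q : (joinWithEdgeless H m).Walk x y),
      (∀ v ∈ Q.support, v.isLeft) →
      ∃ (a b : W) (_ : x = Sum.inl a) (_ : y = Sum.inl b)
        (Q' : H.Walk a b), Q'.support.map Sum.inl = Q.support := by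
  intro x y Q
  induction Q with
  | nil =>
    intro hsup
    rename_i u
    have hu := hsup u (by simp)
    obtain ⟨a, rfl⟩ : ∃ a, u = Sum.inl a := by
      cases u with
      | inl a => exact ⟨a, rfl⟩
      | inr b => simp at hu
    exact ⟨a, a, rfl, rfl, SimpleGraph.Walk.nil, by simp⟩
  | cons h Q ih =>
    intro hsup
    rename_i u v w
    obtain ⟨a', b, hv, hw, Q', hQ'⟩ := ih (fun z hz => hsup z (by simp [hz]))
    have hu := hsup u (by simp)
    obtain ⟨a, rfl⟩ : ∃ a, u = Sum.inl a := by
      cases u with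
      | inl a => exact ⟨a, rfl⟩
      | inr b => simp at hu
    subst hv hw
    have hadj : H.Adj a a' := h
    exact ⟨a, b, rfl, rfl, SimpleGraph.Walk.cons hadj Q', by simp [hQ']⟩

/-- If `H` is a finite graph that is not `2`-linked and `k ≥ 3`, then the join
of `H` with an edgeless graph on `2k − 4` vertices is not `k`-linked. -/
theorem stmt_16 {W : Type} [Fintype W] (H : SimpleGraph W) (k : ℕ) (hk : 3 ≤ k)
    (hH : ¬ IsLinked H 2) :
    ¬ IsLinked (joinWithEdgeless H (2 * k - 4)) k := by
  set m := 2 * k - 4 with hm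
  rintro ⟨hcard, hlink⟩
  rw [Fintype.card_sum, Fintype.card_fin] at hcard
  by_cases hW : 2 * 2 ≤ Fintype.card W
  · -- extract a failing pair from hH
    rw [IsLinked, not_and] at hH
    have hH2 := hH hW
    push_neg at hH2
    obtain ⟨s₀, t₀, hinj₀, hfail⟩ := hH2
    -- define the terminals in the join
    set s : Fin k → W ⊕ Fin m := fun i =>
      if h : i.val < 2 then Sum.inl (s₀ ⟨i.val, h⟩)
      else Sum.inr ⟨2 * (i.val - 2), by omega⟩ with hs
    set t : Fin k → W ⊕ Fin m := fun i =>
      if h : i.val < 2 then Sum.inl (t₀ ⟨i.val, h⟩)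
      else Sum.inr ⟨2 * (i.val - 2) + 1, by omega⟩ with ht
    have hinj : Function.Injective (Sum.elim s t) := by
      rintro (i | i) (j | j) h <;> simp only [Sum.elim_inl, Sum.elim_inr, hs, ht] at h
      · by_cases hi : i.val < 2 <;> by_cases hj : j.val < 2 <;>
          simp [hi, hj] at h
        · have := hinj₀ (a₁ := Sum.inl ⟨i.val, hi⟩) (a₂ := Sum.inl ⟨j.val, hj⟩) (by simpa using h)
          simp only [Sum.inl.injEq, Fin.mk.injEq] at this
          congr 1; exact Fin.ext this
        · congr 1; exact Fin.ext (by omega)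
      · by_cases hi : i.val < 2 <;> by_cases hj : j.val < 2 <;>
          simp [hi, hj] at h
        · have := hinj₀ (a₁ := Sum.inl ⟨i.val, hi⟩) (a₂ := Sum.inr ⟨j.val, hj⟩) (by simpa using h)
          simp at this
        · omega
      · by_cases hi : i.val < 2 <;> by_cases hj : j.val < 2 <;>
          simp [hi, hj] at h
        · have := hinj₀ (a₁ := Sum.inr ⟨i.val, hi⟩) (a₂ := Sum.inl ⟨j.val, hj⟩) (by simpa using h)
          simp at this
        · omega
      · by_cases hi : i.val < 2 <;> by_cases hj : j.val < 2 <;>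
          simp [hi, hj] at h
        · have := hinj₀ (a₁ := Sum.inr ⟨i.val, hi⟩) (a₂ := Sum.inr ⟨j.val, hj⟩) (by simpa using h)
          simp only [Sum.inr.injEq, Fin.mk.injEq] at this
          congr 1; exact Fin.ext this
        · congr 1; exact Fin.ext (by omega)
    obtain ⟨P, hpath, hdisj⟩ := hlink s t hinj
    -- every inr vertex is a terminal of some P_i with i ≥ 2
    have hcover : ∀ x : Fin m, ∃ i : Fin k, 2 ≤ i.val ∧
        (s i = Sum.inr x ∨ t i = Sum.inr x) := by
      intro x
      have hx := x.isLt
      refine ⟨⟨x.val / 2 + 2, by omega⟩, by simp, ?_⟩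
      by_cases hpar : x.val % 2 = 0
      · left
        simp only [hs]
        rw [dif_neg (by omega)]
        congr 1
        apply Fin.ext
        show 2 * (x.val / 2 + 2 - 2) = x.val
        omega
      · right
        simp only [ht]
        rw [dif_neg (by omega)]
        congr 1
        apply Fin.ext
        show 2 * (x.val / 2 + 2 - 2) + 1 = x.val
        omega
    -- P 0 and P 1 stay inside the inl part
    have hleft : ∀ j : Fin k, j.val < 2 → ∀ v ∈ (P j).support, v.isLeft := by
      intro j hj v hv
      cases v with
      | inl a => rfl
      | inr x =>
        exfalso
        obtain ⟨i, hi2, hi⟩ := hcover x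
        have hij : i ≠ j := by
          intro hij; subst hij; omega
        have hmem : Sum.inr x ∈ (P i).support := by
          rcases hi with hi | hi
          · rw [← hi]; exact SimpleGraph.Walk.start_mem_support _
          · rw [← hi]; exact SimpleGraph.Walk.end_mem_support _
        exact hdisj i j hij _ hmem hv
    -- pull back P 0 and P 1
    obtain ⟨a0, b0, ha0, hb0, Q0, hQ0⟩ :=
      pull_walk H (P ⟨0, by omega⟩) (hleft _ (by show (0:ℕ) < 2; omega))
    obtain ⟨a1, b1, ha1, hb1, Q1, hQ1⟩ :=
      pull_walk H (P ⟨1, by omega⟩) (hleft _ (by show (1:ℕ) < 2; omega))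
    have ea0 : a0 = s₀ 0 := by
      have h00 : s ⟨0, by omega⟩ = Sum.inl (s₀ 0) := by simp [hs]
      rw [h00] at ha0; exact Sum.inl.inj ha0.symm
    have eb0 : b0 = t₀ 0 := by
      have h01 : t ⟨0, by omega⟩ = Sum.inl (t₀ 0) := by simp [ht]
      rw [h01] at hb0; exact Sum.inl.inj hb0.symm
    have ea1 : a1 = s₀ 1 := by
      have h10 : s ⟨1, by omega⟩ = Sum.inl (s₀ 1) := by simp [hs]
      rw [h10] at ha1; exact Sum.inl.inj ha1.symm
    have eb1 : b1 = t₀ 1 := by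
      have h11 : t ⟨1, by omega⟩ = Sum.inl (t₀ 1) := by simp [ht]
      rw [h11] at hb1; exact Sum.inl.inj hb1.symm
    subst ea0 eb0 ea1 eb1
    set P' : (i : Fin 2) → H.Walk (s₀ i) (t₀ i) := fun i =>
      match i with
      | ⟨0, _⟩ => Q0
      | ⟨1, _⟩ => Q1 with hP'
    have hpaths : ∀ i, (P' i).IsPath := by
      intro i
      match i with
      | ⟨0, _⟩ =>
        have h := (hpath ⟨0, by omega⟩).support_nodup
        rw [← hQ0] at h
        exact SimpleGraph.Walk.IsPath.mk' ((List.nodup_map_iff Sum.inl_injective).mp h)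
      | ⟨1, _⟩ =>
        have h := (hpath ⟨1, by omega⟩).support_nodup
        rw [← hQ1] at h
        exact SimpleGraph.Walk.IsPath.mk' ((List.nodup_map_iff Sum.inl_injective).mp h)
    obtain ⟨i, j, hij, v, hvi, hvj⟩ := hfail P' hpaths
    have key0 : ∀ v, v ∈ Q0.support → Sum.inl v ∈ (P ⟨0, by omega⟩).support := by
      intro v hv; rw [← hQ0]; exact List.mem_map_of_mem hv
    have key1 : ∀ v, v ∈ Q1.support → Sum.inl v ∈ (P ⟨1, by omega⟩).support := by
      intro v hv; rw [← hQ1]; exact List.mem_map_of_mem hv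
    have hne : (⟨0, by omega⟩ : Fin k) ≠ ⟨1, by omega⟩ :=
      Fin.ne_of_val_ne (show (0:ℕ) ≠ 1 by omega)
    match i, j with
    | ⟨0, _⟩, ⟨0, _⟩ => exact hij rfl
    | ⟨1, _⟩, ⟨1, _⟩ => exact hij rfl
    | ⟨0, _⟩, ⟨1, _⟩ =>
      exact hdisj _ _ hne _ (key0 v hvi) (key1 v hvj)
    | ⟨1, _⟩, ⟨0, _⟩ =>
      exact hdisj _ _ hne.symm _ (key1 v hvi) (key0 v hvj)
  · -- too few vertices
    omega
end
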